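/- For any HDA X and Y, every pointed precubical morphism f : X̃ → Y from the unfolding of X to Y factors uniquely through the projection of Y: there exists a unique pointed precubical morphism g : X̃ → Ỹ with f = π_Y∘g. Consequently, there is a coreflection U_1 : HDAh ⇄ HDA : U_2 with U_1 left adjoint given by U_1(X) = X̃ on objects and U_1(f) = f on morphisms, U_2 right adjoint given by U_2(X) = X on objects and U_2(f) = f̃ on morphisms, and counit the projections π_X : X̃ → X. -/

import Mathlib

set_option autoImplicit false

/-- A precubical set: a graded set with face maps `δ_k^ν` (ν encoded as `Bool`,
`false` = lower face `δ^0`, `true` = upper face `δ^1`; indices are 0-based)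
satisfying the precubical identity. -/
structure PCSet : Type 1 where
  cube : ℕ → Type
  face : ∀ {n : ℕ}, Bool → Fin (n + 1) → cube (n + 1) → cube n
  precub : ∀ {n : ℕ} (ν μ : Bool) (k l : ℕ) (hk : k < n + 1) (hl : l < n + 2)
      (_ : k < l) (x : cube (n + 2)),
      face ν ⟨k, hk⟩ (face μ ⟨l, hl⟩ x) =
        face μ ⟨l - 1, by omega⟩ (face ν ⟨k, by omega⟩ x)

namespace PCSet

/-- A cube of arbitrary dimension. -/
abbrev Cell (X : PCSet) : Type := Σ n : ℕ, X.cube n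

/-- One step of a cube path: either `x = δ_k^0 y` or `y = δ_k^1 x`. -/
def Step (X : PCSet) (x y : X.Cell) : Prop :=
  (∃ (n : ℕ) (k : Fin (n + 1)) (c : X.cube (n + 1)),
      x = ⟨n, X.face false k c⟩ ∧ y = ⟨n + 1, c⟩) ∨
  (∃ (n : ℕ) (k : Fin (n + 1)) (c : X.cube (n + 1)),
      x = ⟨n + 1, c⟩ ∧ y = ⟨n, X.face true k c⟩)

/-- A cube path: a nonempty sequence of cubes, consecutive ones related by `Step`. -/
def IsCubePath (X : PCSet) (l : List X.Cell) : Prop :=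
  l ≠ [] ∧ l.Chain' X.Step

/-- Adjacency condition (1): `x_{p−1} = δ_k^0 x_p`, `x_p = δ_ℓ^0 x_{p+1}`,
`y_{p−1} = δ_{ℓ−1}^0 y_p`, `y_p = δ_k^0 y_{p+1}`, `k < ℓ`.
Here `a = x_{p-1} = y_{p-1}`, `b = x_p`, `b' = y_p`, `c = x_{p+1} = y_{p+1}`. -/
def Adj1 (X : PCSet) (a b b' c : X.Cell) : Prop :=
  ∃ (n k l : ℕ) (hk : k < n + 1) (hl : l < n + 2) (_ : k < l) (u : X.cube (n + 2)),
    c = ⟨n + 2, u⟩ ∧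
    b = ⟨n + 1, X.face false ⟨l, hl⟩ u⟩ ∧
    b' = ⟨n + 1, X.face false ⟨k, by omega⟩ u⟩ ∧
    a = ⟨n, X.face false ⟨k, hk⟩ (X.face false ⟨l, hl⟩ u)⟩ ∧
    a = ⟨n, X.face false ⟨l - 1, by omega⟩ (X.face false ⟨k, by omega⟩ u)⟩

/-- Adjacency condition (2): `x_p = δ_k^1 x_{p−1}`, `x_{p+1} = δ_ℓ^1 x_p`,
`y_p = δ_{ℓ−1}^1 y_{p−1}`, `y_{p+1} = δ_k^1 y_p`, `k < ℓ`. -/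
def Adj2 (X : PCSet) (a b b' c : X.Cell) : Prop :=
  ∃ (n k l : ℕ) (hk : k < n + 2) (hl : l < n + 1) (_ : k < l) (u : X.cube (n + 2)),
    a = ⟨n + 2, u⟩ ∧
    b = ⟨n + 1, X.face true ⟨k, hk⟩ u⟩ ∧
    b' = ⟨n + 1, X.face true ⟨l - 1, by omega⟩ u⟩ ∧
    c = ⟨n, X.face true ⟨l, hl⟩ (X.face true ⟨k, hk⟩ u)⟩ ∧
    c = ⟨n, X.face true ⟨k, by omega⟩ (X.face true ⟨l - 1, by omega⟩ u)⟩

/-- Adjacency condition (3): `x_p = δ_k^0 δ_ℓ^1 y_p`, `y_{p−1} = δ_k^0 y_p`,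
`y_{p+1} = δ_ℓ^1 y_p`, `k < ℓ`. -/
def Adj3 (X : PCSet) (a b b' c : X.Cell) : Prop :=
  ∃ (n k l : ℕ) (hk : k < n + 1) (hl : l < n + 2) (_ : k < l) (u : X.cube (n + 2)),
    b' = ⟨n + 2, u⟩ ∧
    b = ⟨n, X.face false ⟨k, hk⟩ (X.face true ⟨l, hl⟩ u)⟩ ∧
    a = ⟨n + 1, X.face false ⟨k, by omega⟩ u⟩ ∧
    c = ⟨n + 1, X.face true ⟨l, hl⟩ u⟩

/-- Adjacency condition (4): `x_p = δ_k^1 δ_ℓ^0 y_p`, `y_{p−1} = δ_ℓ^0 y_p`,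
`y_{p+1} = δ_k^1 y_p`, `k < ℓ`. -/
def Adj4 (X : PCSet) (a b b' c : X.Cell) : Prop :=
  ∃ (n k l : ℕ) (hk : k < n + 1) (hl : l < n + 2) (_ : k < l) (u : X.cube (n + 2)),
    b' = ⟨n + 2, u⟩ ∧
    b = ⟨n, X.face true ⟨k, hk⟩ (X.face false ⟨l, hl⟩ u)⟩ ∧
    a = ⟨n + 1, X.face false ⟨l, hl⟩ u⟩ ∧
    c = ⟨n + 1, X.face true ⟨k, by omega⟩ u⟩

/-- One of the four adjacency conditions holds, possibly with the roles of the
two paths exchanged. -/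
def AdjMid (X : PCSet) (a b b' c : X.Cell) : Prop :=
  Adj1 X a b b' c ∨ Adj2 X a b b' c ∨ Adj3 X a b b' c ∨ Adj4 X a b b' c ∨
  Adj1 X a b' b c ∨ Adj2 X a b' b c ∨ Adj3 X a b' b c ∨ Adj4 X a b' b c

/-- Two cube paths are adjacent: they agree everywhere except at exactly one
(interior) index `p`, where one of the four exchange conditions holds. -/
def Adjacent (X : PCSet) (l₁ l₂ : List X.Cell) : Prop :=
  X.IsCubePath l₁ ∧ X.IsCubePath l₂ ∧ l₁.length = l₂.length ∧
  ∃ p : ℕ, 0 < p ∧ p + 1 < l₁.length ∧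
    (∀ q : ℕ, q ≠ p → l₁[q]? = l₂[q]?) ∧
    l₁[p]? ≠ l₂[p]? ∧
    ∃ a b b' c : X.Cell,
      l₁[p - 1]? = some a ∧ l₁[p]? = some b ∧ l₂[p]? = some b' ∧
      l₁[p + 1]? = some c ∧ X.AdjMid a b b' c

/-- Homotopy of cube paths: the reflexive-transitive closure of adjacency. -/
def Homotopic (X : PCSet) : List X.Cell → List X.Cell → Prop :=
  Relation.ReflTransGen X.Adjacent

/-- Iterated application of face maps, parameters in application order. -/
inductive IterFace (X : PCSet) : X.Cell → List (ℕ × Bool) → X.Cell → Prop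
  | nil (c : X.Cell) : IterFace X c [] c
  | cons {n : ℕ} (ν : Bool) (k : Fin (n + 1)) (c : X.cube (n + 1)) {l : List (ℕ × Bool)}
      {res : X.Cell} :
      IterFace X ⟨n, X.face ν k c⟩ l res →
      IterFace X ⟨n + 1, c⟩ ((k.1, ν) :: l) res

/-- `p` is obtained from `c` as `δ_{k_1}^{ν_1}⋯δ_{k_q}^{ν_q} c` where
`k_1 < ⋯ < k_q` (in application order, the index list `ks` is strictly
decreasing). -/
def RepGen (X : PCSet) (c p : X.Cell) (ks : List ℕ) : Prop :=
  List.Pairwise (· > ·) ks ∧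
  ∃ νs : List Bool, νs.length = ks.length ∧ IterFace X c (ks.zip νs) p

/-- `l` is a representing sequence for a precubical path object. -/
def IsRep (X : PCSet) (l : List X.Cell) : Prop :=
  l ≠ [] ∧ l.Nodup ∧ l.Chain' X.Step ∧
  ∀ p : X.Cell, ∃ c ∈ l, (∃ ks, RepGen X c p ks) ∧
    ∀ ks₁ ks₂ : List ℕ, RepGen X c p ks₁ → RepGen X c p ks₂ → ks₁ = ks₂

/-- Morphisms of precubical sets. -/
structure Hom (X Y : PCSet) where
  map : ∀ n : ℕ, X.cube n → Y.cube n
  comm : ∀ (n : ℕ) (ν : Bool) (k : Fin (n + 1)) (x : X.cube (n + 1)),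
    map n (X.face ν k x) = Y.face ν k (map (n + 1) x)

def Hom.id (X : PCSet) : Hom X X where
  map _ x := x
  comm _ _ _ _ := rfl

def Hom.comp {X Y Z : PCSet} (g : Hom Y Z) (f : Hom X Y) : Hom X Z where
  map n x := g.map n (f.map n x)
  comm n ν k x := by rw [f.comm, g.comm]

def Hom.cell {X Y : PCSet} (f : Hom X Y) (x : X.Cell) : Y.Cell := ⟨x.1, f.map x.1 x.2⟩

/-- `R` is a precubical subset of the product `X × Y`. -/
def PrecubRel (X Y : PCSet) (R : Set (X.Cell × Y.Cell)) : Prop :=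
  (∀ p ∈ R, p.1.1 = p.2.1) ∧
  ∀ (n : ℕ) (x : X.cube (n + 1)) (y : Y.cube (n + 1)),
    ((⟨n + 1, x⟩, ⟨n + 1, y⟩) : X.Cell × Y.Cell) ∈ R →
    ∀ (ν : Bool) (k : Fin (n + 1)),
      ((⟨n, X.face ν k x⟩, ⟨n, Y.face ν k y⟩) : X.Cell × Y.Cell) ∈ R

/-- One-step bisimulation via a precubical relation (condition (2) of Thm 3.4). -/
def OneStepBisim (X Y : PCSet) (bx : X.Cell) (by' : Y.Cell) : Prop :=
  ∃ R : Set (X.Cell × Y.Cell), PrecubRel X Y R ∧ (bx, by') ∈ R ∧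
    ∀ (n : ℕ) (x₁ : X.cube n) (y₁ : Y.cube n),
      ((⟨n, x₁⟩, ⟨n, y₁⟩) : X.Cell × Y.Cell) ∈ R →
      (∀ (x₂ : X.cube (n + 1)) (k : Fin (n + 1)), x₁ = X.face false k x₂ →
        ∃ y₂ : Y.cube (n + 1), y₁ = Y.face false k y₂ ∧
          ((⟨n + 1, x₂⟩, ⟨n + 1, y₂⟩) : X.Cell × Y.Cell) ∈ R) ∧
      (∀ (y₂ : Y.cube (n + 1)) (k : Fin (n + 1)), y₁ = Y.face false k y₂ →
        ∃ x₂ : X.cube (n + 1), x₁ = X.face false k x₂ ∧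
          ((⟨n + 1, x₂⟩, ⟨n + 1, y₂⟩) : X.Cell × Y.Cell) ∈ R)

/-- Cube-path matching bisimulation (condition (3) of Thm 3.4). -/
def PathBisim (X Y : PCSet) (bx : X.Cell) (by' : Y.Cell) : Prop :=
  ∃ R : Set (X.Cell × Y.Cell), PrecubRel X Y R ∧ (bx, by') ∈ R ∧
    ∀ (x₁ : X.Cell) (y₁ : Y.Cell), (x₁, y₁) ∈ R →
      (∀ lx : List X.Cell, X.IsCubePath lx → lx.head? = some x₁ →
        ∃ ly : List Y.Cell, Y.IsCubePath ly ∧ ly.head? = some y₁ ∧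
          ly.length = lx.length ∧ ∀ pr ∈ lx.zip ly, pr ∈ R) ∧
      (∀ ly : List Y.Cell, Y.IsCubePath ly → ly.head? = some y₁ →
        ∃ lx : List X.Cell, X.IsCubePath lx ∧ lx.head? = some x₁ ∧
          lx.length = ly.length ∧ ∀ pr ∈ lx.zip ly, pr ∈ R)

/-- A fan-shaped cube path: one-dimensional (alternating dimensions 0 and 1)
until it has to build up to its end cube of dimension `n`. -/
def IsFan (X : PCSet) (l : List X.Cell) : Prop :=
  ∃ (n : ℕ) (c : X.cube n), l.getLast? = some ⟨n, c⟩ ∧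
    ∀ (i : ℕ) (hi : i < l.length),
      (i + n + 1 ≤ l.length → (l.get ⟨i, hi⟩).1 = if i % 2 = 0 then 0 else 1) ∧
      (l.length < i + n + 1 → (l.get ⟨i, hi⟩).1 = n + i + 1 - l.length)

/-- The cube path `(x_1, …, x_n, x)` obtained by repeatedly taking lower faces
`x_j = δ_{k_j}^0 ⋯ δ_{k_n}^0 x`, one for each choice of indices `k_j ≤ j`. -/
def lowerChain (X : PCSet) : ∀ (n : ℕ), X.cube n → (∀ j : Fin n, Fin (j.1 + 1)) → List X.Cell
  | 0, x, _ => [⟨0, x⟩]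
  | n + 1, x, ks =>
      lowerChain X n (X.face false (ks ⟨n, Nat.lt_succ_self n⟩) x)
        (fun j => ks ⟨j.1, by omega⟩) ++ [⟨n + 1, x⟩]

end PCSet

open PCSet

/-- A higher-dimensional automaton: a pointed precubical set. -/
structure HDA extends PCSet where
  base : cube 0

/-- Pointed morphisms of higher-dimensional automata. -/
structure HDAHom (X Y : HDA) where
  toHom : Hom X.toPCSet Y.toPCSet
  pointed : toHom.map 0 X.base = Y.base

def HDAHom.id (X : HDA) : HDAHom X X := ⟨Hom.id _, rfl⟩

def HDAHom.comp {X Y Z : HDA} (g : HDAHom Y Z) (f : HDAHom X Y) : HDAHom X Z :=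
  ⟨g.toHom.comp f.toHom, by
    show g.toHom.map 0 (f.toHom.map 0 X.base) = Z.base
    rw [f.pointed, g.pointed]⟩

def HDAHom.IsIso {X Y : HDA} (f : HDAHom X Y) : Prop :=
  ∃ g : HDAHom Y X, g.comp f = HDAHom.id X ∧ f.comp g = HDAHom.id Y

/-- A pointed cube path: a cube path starting in the base point. -/
def HDA.IsPointedPath (X : HDA) (l : List X.toPCSet.Cell) : Prop :=
  X.toPCSet.IsCubePath l ∧ l.head? = some ⟨0, X.base⟩

/-- A cube is reachable if some pointed cube path ends in it. -/
def HDA.Reachable (X : HDA) (x : X.toPCSet.Cell) : Prop :=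
  ∃ l, X.IsPointedPath l ∧ l.getLast? = some x

/-- The type of pointed cube paths of `X` ending in an `n`-cube. -/
def HDA.PPath (X : HDA) (n : ℕ) : Type :=
  { l : List X.toPCSet.Cell //
      X.IsPointedPath l ∧ ∃ c : X.cube n, l.getLast? = some ⟨n, c⟩ }

/-- A pointed precubical path object (object of the category HDP). -/
def HDA.IsPathObj (P : HDA) : Prop :=
  ∃ l, IsRep P.toPCSet l ∧ l.head? = some ⟨0, P.base⟩

/-- A cube path extension: maps the representation of `P` to an initial segment
of the representation of `Q`. -/
def IsExtension {P Q : HDA} (f : HDAHom P Q) : Prop :=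
  ∃ (lp : List P.toPCSet.Cell) (lq : List Q.toPCSet.Cell),
    IsRep P.toPCSet lp ∧ lp.head? = some ⟨0, P.base⟩ ∧
    IsRep Q.toPCSet lq ∧ lq.head? = some ⟨0, Q.base⟩ ∧
    ∃ hle : lp.length ≤ lq.length,
      ∀ (j : ℕ) (hj : j < lp.length),
        f.toHom.cell (lp.get ⟨j, hj⟩) = lq.get ⟨j, lt_of_lt_of_le hj hle⟩

/-- Morphisms of the category HDP: generated by pointed cube path extensions
and isomorphisms between pointed precubical path objects. -/
inductive IsHDPHom : ∀ {P Q : HDA}, HDAHom P Q → Prop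
  | ext {P Q : HDA} (f : HDAHom P Q) :
      P.IsPathObj → Q.IsPathObj → IsExtension f → IsHDPHom f
  | iso {P Q : HDA} (f : HDAHom P Q) :
      P.IsPathObj → Q.IsPathObj → f.IsIso → IsHDPHom f
  | comp {P Q R : HDA} {f : HDAHom P Q} {g : HDAHom Q R} :
      IsHDPHom f → IsHDPHom g → IsHDPHom (g.comp f)

/-- Open maps of HDA: right lifting property with respect to HDP. -/
def IsOpenHom {X Y : HDA} (f : HDAHom X Y) : Prop :=
  ∀ (P Q : HDA) (g : HDAHom P Q), IsHDPHom g →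
    ∀ (p : HDAHom P X) (q : HDAHom Q Y), f.comp p = q.comp g →
      ∃ r : HDAHom Q X, r.comp g = p ∧ f.comp r = q

/-- hd-bisimilarity: a span of open maps. -/
def HdBisimilar (X Y : HDA) : Prop :=
  ∃ (Z : HDA) (f : HDAHom Z X) (g : HDAHom Z Y), IsOpenHom f ∧ IsOpenHom g

/-- A higher-dimensional tree: every cube is the end of exactly one homotopy
class of pointed cube paths. -/
def HDA.IsTree (X : HDA) : Prop :=
  ∀ x : X.toPCSet.Cell,
    (∃ l, X.IsPointedPath l ∧ l.getLast? = some x) ∧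
    ∀ l₁ l₂ : List X.toPCSet.Cell, X.IsPointedPath l₁ → l₁.getLast? = some x →
      X.IsPointedPath l₂ → l₂.getLast? = some x → X.toPCSet.Homotopic l₁ l₂

/-- An unfolding of the HDA `X`: an HDA `Xu` whose `n`-cubes are exactly the
homotopy classes (`cls`) of pointed cube paths of `X` ending in an `n`-cube,
with the face maps, base point and projection of Definition 4.3. -/
structure Unfolding (X : HDA) where
  Xu : HDA
  proj : HDAHom Xu X
  cls : ∀ n : ℕ, X.PPath n → Xu.cube n
  cls_eq : ∀ (n : ℕ) (a b : X.PPath n),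
    cls n a = cls n b ↔ X.toPCSet.Homotopic a.1 b.1
  cls_surj : ∀ (n : ℕ) (x : Xu.cube n), ∃ a, cls n a = x
  cls_base : ∀ a : X.PPath 0, a.1 = [⟨0, X.base⟩] → cls 0 a = Xu.base
  face_true : ∀ (n : ℕ) (k : Fin (n + 1)) (a : X.PPath (n + 1)) (c : X.cube (n + 1)),
    a.1.getLast? = some ⟨n + 1, c⟩ →
    ∀ b : X.PPath n, b.1 = a.1 ++ [⟨n, X.toPCSet.face true k c⟩] →
      Xu.toPCSet.face true k (cls (n + 1) a) = cls n b
  face_false : ∀ (n : ℕ) (k : Fin (n + 1)) (a : X.PPath (n + 1)) (c : X.cube (n + 1)),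
    a.1.getLast? = some ⟨n + 1, c⟩ →
    ∀ b : X.PPath n,
      (Xu.toPCSet.face false k (cls (n + 1) a) = cls n b ↔
        b.1.getLast? = some ⟨n, X.toPCSet.face false k c⟩ ∧
          X.toPCSet.Homotopic (b.1 ++ [⟨n + 1, c⟩]) a.1)
  proj_cls : ∀ (n : ℕ) (a : X.PPath n) (c : X.cube n),
    a.1.getLast? = some ⟨n, c⟩ → proj.toHom.map n (cls n a) = c

/-- The set `δ̃_k^0 [l]` of Definition 4.3: pointed cube paths `l'` with
`l'` ending in `δ_k^0 c` and `l' * (c) ∼ l`. -/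
def predSet (X : HDA) (n : ℕ) (k : Fin (n + 1)) (c : X.cube (n + 1))
    (l : List X.toPCSet.Cell) : Set (List X.toPCSet.Cell) :=
  { l' | X.IsPointedPath l' ∧ l'.getLast? = some ⟨n, X.toPCSet.face false k c⟩ ∧
      X.toPCSet.Homotopic (l' ++ [(⟨n + 1, c⟩ : X.toPCSet.Cell)]) l }

/-- Prefix order on homotopy classes (cubes of an unfolding): some
representatives are prefix-related. -/
def Unfolding.ClassLe {X : HDA} (U : Unfolding X) (c d : U.Xu.toPCSet.Cell) : Prop :=
  ∃ (a : X.PPath c.1) (b : X.PPath d.1),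
    U.cls c.1 a = c.2 ∧ U.cls d.1 b = d.2 ∧ a.1 <+: b.1

/-- `h` is the morphism of unfoldings induced by `g` (i.e. `g̃`). -/
def IsUnfoldMap {X Y : HDA} (UX : Unfolding X) (UY : Unfolding Y)
    (g : HDAHom X Y) (h : HDAHom UX.Xu UY.Xu) : Prop :=
  ∀ (n : ℕ) (a : X.PPath n), ∃ b : Y.PPath n,
    b.1 = a.1.map g.toHom.cell ∧ h.toHom.map n (UX.cls n a) = UY.cls n b

/-- Open maps in the category HDAh: right lifting property with respect to
HDPh (morphisms of unfoldings corresponding to HDP-morphisms under the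
projections). -/
def IsOpenHDAh {X Y : HDA} (UX : Unfolding X) (UY : Unfolding Y)
    (f : HDAHom UX.Xu UY.Xu) : Prop :=
  ∀ (P Q : HDA) (UP : Unfolding P) (UQ : Unfolding Q) (g : HDAHom UP.Xu UQ.Xu),
    (∃ g₀ : HDAHom P Q, IsHDPHom g₀ ∧ UQ.proj.comp g = g₀.comp UP.proj) →
    ∀ (p : HDAHom UP.Xu UX.Xu) (q : HDAHom UQ.Xu UY.Xu),
      f.comp p = q.comp g →
      ∃ r : HDAHom UQ.Xu UX.Xu, r.comp g = p ∧ f.comp r = q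

/-- Homotopy bisimilarity: a span of open maps in HDAh. -/
def HomotopyBisimilar (X Y : HDA) : Prop :=
  ∃ (Z : HDA) (UX : Unfolding X) (UY : Unfolding Y) (UZ : Unfolding Z)
    (f : HDAHom UZ.Xu UX.Xu) (g : HDAHom UZ.Xu UY.Xu),
    IsOpenHDAh UZ UX f ∧ IsOpenHDAh UZ UY g

/-- Prefix-matching bisimulation on unfoldings (condition (4) of Prop 6.5). -/
def PrefixBisim {X Y : HDA} (UX : Unfolding X) (UY : Unfolding Y) : Prop :=
  ∃ R : Set (UX.Xu.toPCSet.Cell × UY.Xu.toPCSet.Cell),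
    PrecubRel UX.Xu.toPCSet UY.Xu.toPCSet R ∧
    ((⟨0, UX.Xu.base⟩, ⟨0, UY.Xu.base⟩) : _ × _) ∈ R ∧
    ∀ (c : UX.Xu.toPCSet.Cell) (d : UY.Xu.toPCSet.Cell), (c, d) ∈ R →
      (∀ c₂, UX.ClassLe c c₂ → ∃ d₂, UY.ClassLe d d₂ ∧ (c₂, d₂) ∈ R) ∧
      (∀ d₂, UY.ClassLe d d₂ → ∃ c₂, UX.ClassLe c c₂ ∧ (c₂, d₂) ∈ R)

/-- One refinement step of the fixed-point algorithm deciding hd-bisimilarity. -/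
def refineStep (X Y : HDA) (S : Set (X.toPCSet.Cell × Y.toPCSet.Cell)) :
    Set (X.toPCSet.Cell × Y.toPCSet.Cell) :=
  { p | p ∈ S ∧ p.1.1 = p.2.1 ∧
    (∀ (n : ℕ) (x : X.cube (n + 1)) (y : Y.cube (n + 1)),
      p = (⟨n + 1, x⟩, ⟨n + 1, y⟩) →
      ∀ (ν : Bool) (k : Fin (n + 1)),
        ((⟨n, X.toPCSet.face ν k x⟩, ⟨n, Y.toPCSet.face ν k y⟩) : _ × _) ∈ S) ∧
    (∀ (n : ℕ) (x₁ : X.cube n) (y₁ : Y.cube n),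
      p = (⟨n, x₁⟩, ⟨n, y₁⟩) →
      (∀ (x₂ : X.cube (n + 1)) (k : Fin (n + 1)), x₁ = X.toPCSet.face false k x₂ →
        ∃ y₂ : Y.cube (n + 1), y₁ = Y.toPCSet.face false k y₂ ∧
          ((⟨n + 1, x₂⟩, ⟨n + 1, y₂⟩) : _ × _) ∈ S) ∧
      (∀ (y₂ : Y.cube (n + 1)) (k : Fin (n + 1)), y₁ = Y.toPCSet.face false k y₂ →
        ∃ x₂ : X.cube (n + 1), x₁ = X.toPCSet.face false k x₂ ∧
          ((⟨n + 1, x₂⟩, ⟨n + 1, y₂⟩) : _ × _) ∈ S)) }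

section Dev
open PCSet List

namespace Coref
variable {X Y : HDA}

/-- generic list facts -/
theorem head?_take {α : Type} (l : List α) {m : ℕ} (h : 0 < m) : (l.take m).head? = l.head? := by
  cases l <;> cases m <;> simp_all

theorem getLast?_take {α : Type} (l : List α) {m : ℕ} (h1 : 0 < m) (h2 : m ≤ l.length) :
    (l.take m).getLast? = l[m-1]? := by
  rw [List.getLast?_eq_getElem?]
  simp [List.length_take, Nat.min_eq_left h2, List.getElem?_take]
  omega

theorem take_succ_eq {α : Type} (l : List α) {m : ℕ} (h : m < l.length) :
    l.take (m+1) = l.take m ++ [l[m]] := by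
  rw [List.take_succ]; simp [List.getElem?_eq_getElem h]

/-- path lemmas -/
theorem isCubePath_take {l : List X.toPCSet.Cell} (h : X.toPCSet.IsCubePath l)
    {m : ℕ} (hm : 0 < m) : X.toPCSet.IsCubePath (l.take m) := by
  refine ⟨?_, h.2.take m⟩
  cases l with
  | nil => exact absurd rfl h.1
  | cons a t => cases m with
    | zero => omega
    | succ m => simp

theorem pointed_take {l : List X.toPCSet.Cell} (h : X.IsPointedPath l)
    {m : ℕ} (hm : 0 < m) : X.IsPointedPath (l.take m) :=
  ⟨isCubePath_take h.1 hm, by rw [head?_take l hm]; exact h.2⟩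

theorem pointed_append {l : List X.toPCSet.Cell} (h : X.IsPointedPath l)
    {x : X.toPCSet.Cell} (hs : ∀ a, l.getLast? = some a → X.toPCSet.Step a x) :
    X.IsPointedPath (l ++ [x]) := by
  obtain ⟨⟨hne, hch⟩, hh⟩ := h
  refine ⟨⟨by simp, ?_⟩, by rwa [List.head?_append_of_ne_nil _ hne]⟩
  refine List.isChain_append.mpr ?_
  exact ⟨hch, List.isChain_singleton x, fun a ha b hb => by
    simp at hb; subst hb; exact hs a ha⟩

theorem pointed_getLast?_isSome {l : List X.toPCSet.Cell} (h : X.IsPointedPath l) :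
    ∃ e, l.getLast? = some e := by
  cases e : l.getLast? with
  | none => exact absurd (List.getLast?_eq_none_iff.mp e) h.1.1
  | some a => exact ⟨a, rfl⟩

end Coref
end Dev
section Dev2
open PCSet List
namespace Coref
variable {X Y : HDA}

open Classical in
/-- the class cell of a pointed cube path (junk value otherwise) -/
noncomputable def clsCellD (UX : Unfolding X) (l : List X.toPCSet.Cell) : UX.Xu.toPCSet.Cell :=
  if h : X.IsPointedPath l then
    ⟨(l.getLast h.1.1).1,
      UX.cls _ ⟨l, h, (l.getLast h.1.1).2, by
        rw [List.getLast?_eq_getLast h.1.1]⟩⟩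
  else ⟨0, UX.Xu.base⟩

theorem cls_cell_congr (UX : Unfolding X) {n m : ℕ} (a : X.PPath n) (b : X.PPath m)
    (hnm : n = m) (hab : a.1 = b.1) :
    (⟨n, UX.cls n a⟩ : UX.Xu.toPCSet.Cell) = ⟨m, UX.cls m b⟩ := by
  subst hnm
  obtain ⟨la, pa⟩ := a; obtain ⟨lb, pb⟩ := b
  cases hab
  rfl

theorem clsCellD_spec (UX : Unfolding X) {l : List X.toPCSet.Cell}
    (h : X.IsPointedPath l) {n : ℕ} {c : X.cube n} (hl : l.getLast? = some ⟨n, c⟩) :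
    clsCellD UX l = ⟨n, UX.cls n ⟨l, h, c, hl⟩⟩ := by
  unfold clsCellD
  rw [dif_pos h]
  have hg : l.getLast h.1.1 = ⟨n, c⟩ := by
    have := List.getLast?_eq_getLast h.1.1
    rw [this] at hl; exact (Option.some_inj.mp hl)
  exact cls_cell_congr UX _ _ (congrArg Sigma.fst hg) rfl

theorem adjacent_getElem?_ne {l l' : List X.toPCSet.Cell}
    (h : X.toPCSet.Adjacent l l') (q : ℕ)
    (hq : ∀ p : ℕ, (0 < p ∧ p + 1 < l.length ∧ l[p]? ≠ l'[p]?) → q ≠ p) :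
    l[q]? = l'[q]? := by
  obtain ⟨_, _, hlen, p, hp0, hp1, hoff, hne, _⟩ := h
  exact hoff q (hq p ⟨hp0, hp1, hne⟩)

theorem adjacent_pointed {l l' : List X.toPCSet.Cell}
    (h : X.toPCSet.Adjacent l l') (hp : X.IsPointedPath l) : X.IsPointedPath l' := by
  obtain ⟨h1, h2, hlen, p, hp0, hp1, hoff, _⟩ := h
  refine ⟨h2, ?_⟩
  have h0 : l[0]? = l'[0]? := hoff 0 (by omega)
  rw [List.head?_eq_getElem?, ← h0, ← List.head?_eq_getElem?]
  exact hp.2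

theorem adjacent_getLast? {l l' : List X.toPCSet.Cell}
    (h : X.toPCSet.Adjacent l l') : l.getLast? = l'.getLast? := by
  obtain ⟨h1, h2, hlen, p, hp0, hp1, hoff, _⟩ := h
  rw [List.getLast?_eq_getElem?, List.getLast?_eq_getElem?, ← hlen]
  exact hoff (l.length - 1) (by omega)

theorem homotopic_pointed {l l' : List X.toPCSet.Cell}
    (h : X.toPCSet.Homotopic l l') (hp : X.IsPointedPath l) : X.IsPointedPath l' := by
  induction h with
  | refl => exact hp
  | tail _ hadj ih => exact adjacent_pointed hadj ih

theorem homotopic_getLast? {l l' : List X.toPCSet.Cell}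
    (h : X.toPCSet.Homotopic l l') : l.getLast? = l'.getLast? := by
  induction h with
  | refl => rfl
  | tail _ hadj ih => exact ih.trans (adjacent_getLast? hadj)

theorem clsCellD_homotopic (UX : Unfolding X) {l l' : List X.toPCSet.Cell}
    (hp : X.IsPointedPath l) (h : X.toPCSet.Homotopic l l') :
    clsCellD UX l = clsCellD UX l' := by
  have hp' : X.IsPointedPath l' := homotopic_pointed h hp
  obtain ⟨⟨n, c⟩, he⟩ := pointed_getLast?_isSome hp
  have he' : l'.getLast? = some ⟨n, c⟩ := by rw [← homotopic_getLast? h]; exact he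
  rw [clsCellD_spec UX hp he, clsCellD_spec UX hp' he']
  exact congrArg _ ((UX.cls_eq n _ _).mpr h)

end Coref
end Dev2
section Dev3
open PCSet List
namespace Coref
variable {X Y : HDA}

theorem cls_of_clsCellD (UX : Unfolding X) {l : List X.toPCSet.Cell}
    (h : X.IsPointedPath l) {n : ℕ} {c : X.cube n} (hl : l.getLast? = some ⟨n, c⟩)
    {d : UX.Xu.cube n} (hd : clsCellD UX l = ⟨n, d⟩) :
    UX.cls n ⟨l, h, c, hl⟩ = d := by
  rw [clsCellD_spec UX h hl] at hd
  have := (Sigma.mk.inj_iff.mp hd).2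
  exact eq_of_heq this

/-- lower-face relation between class cells -/
theorem clsD_face_false (UX : Unfolding X) {l₁ l₂ : List X.toPCSet.Cell}
    (h1 : X.IsPointedPath l₁) (h2 : X.IsPointedPath l₂) {n : ℕ} {c : X.cube (n + 1)}
    (hlast1 : l₁.getLast? = some ⟨n + 1, c⟩) {k : Fin (n + 1)}
    (hlast2 : l₂.getLast? = some ⟨n, X.toPCSet.face false k c⟩)
    (hhom : X.toPCSet.Homotopic (l₂ ++ [(⟨n + 1, c⟩ : X.toPCSet.Cell)]) l₁)
    {d : UX.Xu.cube (n + 1)} (hd : clsCellD UX l₁ = ⟨n + 1, d⟩) :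
    clsCellD UX l₂ = ⟨n, UX.Xu.toPCSet.face false k d⟩ := by
  rw [clsCellD_spec UX h2 hlast2]
  have hc := cls_of_clsCellD UX h1 hlast1 hd
  have := (UX.face_false n k ⟨l₁, h1, c, hlast1⟩ c hlast1 ⟨l₂, h2, _, hlast2⟩).mpr
    ⟨hlast2, hhom⟩
  rw [hc] at this
  rw [← this]

/-- upper-face relation between class cells -/
theorem clsD_face_true (UX : Unfolding X) {l₁ : List X.toPCSet.Cell}
    (h1 : X.IsPointedPath l₁) {n : ℕ} {c : X.cube (n + 1)}
    (hlast1 : l₁.getLast? = some ⟨n + 1, c⟩) {k : Fin (n + 1)}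
    {l₂ : List X.toPCSet.Cell}
    (hl2 : l₂ = l₁ ++ [(⟨n, X.toPCSet.face true k c⟩ : X.toPCSet.Cell)])
    (h2 : X.IsPointedPath l₂)
    {d : UX.Xu.cube (n + 1)} (hd : clsCellD UX l₁ = ⟨n + 1, d⟩) :
    clsCellD UX l₂ = ⟨n, UX.Xu.toPCSet.face true k d⟩ := by
  have hlast2 : l₂.getLast? = some ⟨n, X.toPCSet.face true k c⟩ := by
    rw [hl2]; simp
  rw [clsCellD_spec UX h2 hlast2]
  have hc := cls_of_clsCellD UX h1 hlast1 hd
  have := UX.face_true n k ⟨l₁, h1, c, hlast1⟩ c hlast1 ⟨l₂, h2, _, hlast2⟩ hl2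
  rw [hc] at this
  rw [this]

/-- a step can be appended to a pointed path, and lifts to the unfolding -/
theorem step_lift (UX : Unfolding X) {l : List X.toPCSet.Cell}
    (h : X.IsPointedPath l) {e x : X.toPCSet.Cell} (hlast : l.getLast? = some e)
    (hs : X.toPCSet.Step e x) :
    X.IsPointedPath (l ++ [x]) ∧
      UX.Xu.toPCSet.Step (clsCellD UX l) (clsCellD UX (l ++ [x])) := by
  have hp2 : X.IsPointedPath (l ++ [x]) :=
    pointed_append h (fun a ha => by rw [hlast] at ha; cases ha; exact hs)
  refine ⟨hp2, ?_⟩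
  rcases hs with ⟨n, k, c, he, hx⟩ | ⟨n, k, c, he, hx⟩
  · -- up step : e = δ_k^0 c, x = c
    subst he; subst hx
    have hlast2 : (l ++ [(⟨n + 1, c⟩ : X.toPCSet.Cell)]).getLast? = some ⟨n + 1, c⟩ := by simp
    rw [clsCellD_spec UX hp2 hlast2]
    have hl : clsCellD UX l = ⟨n, UX.Xu.toPCSet.face false k
        (UX.cls (n + 1) ⟨l ++ [⟨n + 1, c⟩], hp2, c, hlast2⟩)⟩ := by
      refine clsD_face_false UX hp2 h hlast2 hlast (Relation.ReflTransGen.refl) ?_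
      rw [clsCellD_spec UX hp2 hlast2]
    rw [hl]
    exact Or.inl ⟨n, k, _, rfl, rfl⟩
  · -- down step : x = δ_k^1 e
    subst he; subst hx
    obtain ⟨d, hd⟩ : ∃ d, clsCellD UX l = ⟨n + 1, d⟩ := by
      rw [clsCellD_spec UX h hlast]; exact ⟨_, rfl⟩
    rw [hd, clsD_face_true UX h hlast rfl hp2 hd]
    exact Or.inr ⟨n, k, d, rfl, rfl⟩

end Coref
end Dev3
section Dev4
open PCSet List
namespace Coref
variable {X Y : HDA}

/-- the lift of a pointed cube path to the unfolding: classes of its prefixes -/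
noncomputable def Lp (UX : Unfolding X) (l : List X.toPCSet.Cell) : List UX.Xu.toPCSet.Cell :=
  (List.range l.length).map (fun j => clsCellD UX (l.take (j + 1)))

theorem Lp_length (UX : Unfolding X) (l : List X.toPCSet.Cell) :
    (Lp UX l).length = l.length := by simp [Lp]

theorem Lp_getElem? (UX : Unfolding X) (l : List X.toPCSet.Cell) (q : ℕ) :
    (Lp UX l)[q]? = if q < l.length then some (clsCellD UX (l.take (q + 1))) else none := by
  simp [Lp, List.getElem?_map, List.getElem?_range']
  split <;> simp_all [List.getElem?_range]

theorem Lp_concat (UX : Unfolding X) (l : List X.toPCSet.Cell) (x : X.toPCSet.Cell) :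
    Lp UX (l ++ [x]) = Lp UX l ++ [clsCellD UX (l ++ [x])] := by
  unfold Lp
  rw [List.length_append, List.length_singleton, List.range_succ, List.map_append]
  congr 1
  · apply List.map_congr_left
    intro j hj
    simp at hj
    rw [List.take_append_of_le_length (by omega)]
  · rw [List.map_singleton]
    congr 2
    exact List.take_of_length_le (by simp)

theorem Lp_getLast? (UX : Unfolding X) {l : List X.toPCSet.Cell} (hne : l ≠ []) :
    (Lp UX l).getLast? = some (clsCellD UX l) := by
  obtain ⟨l₀, x, rfl⟩ := List.eq_nil_or_concat l |>.resolve_left hne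
  rw [List.concat_eq_append, Lp_concat]; simp

theorem Lp_pointed (UX : Unfolding X) {l : List X.toPCSet.Cell} (h : X.IsPointedPath l) :
    UX.Xu.IsPointedPath (Lp UX l) := by
  induction l using List.reverseRecOn with
  | nil => exact absurd rfl h.1.1
  | append_singleton l₀ x ih =>
    rcases eq_or_ne l₀ [] with rfl | hne
    · -- singleton
      simp only [List.nil_append] at h ⊢
      have hx : x = ⟨0, X.base⟩ := by
        have := h.2; simp at this; exact this
      subst hx
      have h1 : ([(⟨0, X.base⟩ : X.toPCSet.Cell)] : List X.toPCSet.Cell).getLast?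
          = some ⟨0, X.base⟩ := rfl
      constructor
      · exact ⟨by simp [Lp], by simp [Lp]; exact List.isChain_singleton _⟩
      · show (Lp UX [⟨0, X.base⟩]).head? = _
        have : Lp UX [⟨0, X.base⟩] = [clsCellD UX [⟨0, X.base⟩]] := by
          simp [Lp, List.range_succ]
        rw [this]
        rw [clsCellD_spec UX h h1]
        simp only [List.head?_cons, Option.some_inj]
        exact congrArg _ (UX.cls_base _ rfl)
    · -- append step
      have h₀ : X.IsPointedPath l₀ := by
        have := pointed_take h (m := l₀.length) (by
          cases l₀ with | nil => exact absurd rfl hne | cons a t => simp)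
        rwa [List.take_append_of_le_length le_rfl, List.take_length] at this
      obtain ⟨e, he⟩ := pointed_getLast?_isSome h₀
      have hstep : X.toPCSet.Step e x := by
        have hch := h.1.2
        replace hch := List.isChain_append.mp hch
        exact hch.2.2 e he x rfl
      obtain ⟨hp2, hs⟩ := step_lift UX h₀ he hstep
      have ihp := ih h₀
      rw [Lp_concat]
      constructor
      · refine ⟨by simp, ?_⟩
        refine List.isChain_append.mpr ?_
        refine ⟨ihp.1.2, List.isChain_singleton _, fun a ha b hb => ?_⟩
        simp at hb; subst hb
        rw [Lp_getLast? UX h₀.1.1] at ha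
        cases ha
        exact hs
      · rw [List.head?_append_of_ne_nil _ (by simp [Lp]; exact h₀.1.1)]
        exact ihp.2

theorem Lp_last_spec (UX : Unfolding X) {l : List X.toPCSet.Cell} (h : X.IsPointedPath l)
    {n : ℕ} {c : X.cube n} (hl : l.getLast? = some ⟨n, c⟩) :
    (Lp UX l).getLast? = some ⟨n, UX.cls n ⟨l, h, c, hl⟩⟩ := by
  rw [Lp_getLast? UX h.1.1, clsCellD_spec UX h hl]

end Coref
end Dev4
section Dev5
open PCSet List
namespace Coref
variable {X Y : HDA}

theorem take_succ_eq' {α : Type} {s : List α} {m : ℕ} {x : α} (h : s[m]? = some x) :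
    s.take (m + 1) = s.take m ++ [x] := by
  obtain ⟨hm, hx⟩ := List.getElem?_eq_some_iff.mp h
  rw [take_succ_eq s hm, hx]

theorem adjmid_swap {Z : PCSet} {a b b' c : Z.Cell} (h : Z.AdjMid a b b' c) :
    Z.AdjMid a b' b c := by
  unfold PCSet.AdjMid at h ⊢; tauto

theorem adjacent_symm {Z : PCSet} {l l' : List Z.Cell} (h : Z.Adjacent l l') :
    Z.Adjacent l' l := by
  obtain ⟨h1, h2, hlen, p, hp0, hp1, hoff, hne, a, b, b', c, ha, hb, hb', hc, hmid⟩ := h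
  refine ⟨h2, h1, hlen.symm, p, hp0, by omega, fun q hq => (hoff q hq).symm, by
      exact fun hh => hne hh.symm, a, b', b, c, ?_, hb', hb, ?_, adjmid_swap hmid⟩
  · rw [← hoff (p-1) (by omega)]; exact ha
  · rw [← hoff (p+1) (by omega)]; exact hc

theorem homotopic_symm {Z : PCSet} {l l' : List Z.Cell} (h : Z.Homotopic l l') :
    Z.Homotopic l' l := by
  haveI : Std.Symm Z.Adjacent := ⟨fun _ _ => adjacent_symm⟩
  exact Std.Symm.symm (r := Relation.ReflTransGen Z.Adjacent) _ _ h

theorem getElem?_of_take_eq {α : Type} {s s' : List α} {p q : ℕ}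
    (h : s.take p = s'.take p) (hq : q < p) : s[q]? = s'[q]? := by
  have := congrArg (fun t => t[q]?) h
  simpa [List.getElem?_take, hq] using this

end Coref
end Dev5
section Dev6
open PCSet List
namespace Coref
variable {X Y : HDA}

theorem adj1_lift (UX : Unfolding X) {s s' : List X.toPCSet.Cell}
    (hps : X.IsPointedPath s) (hps' : X.IsPointedPath s')
    {p : ℕ} (hp0 : 0 < p) (hp1 : p + 1 < s.length) (hlen : s.length = s'.length)
    (htp : s.take p = s'.take p)
    {a b b' c : X.toPCSet.Cell} (ha : s[p-1]? = some a) (hb : s[p]? = some b)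
    (hb' : s'[p]? = some b') (hc : s[p+1]? = some c) (hc' : s'[p+1]? = some c)
    (hhom : X.toPCSet.Homotopic (s.take (p+2)) (s'.take (p+2)))
    (h : X.toPCSet.Adj1 a b b' c) :
    UX.Xu.toPCSet.Adj1 (clsCellD UX (s.take p)) (clsCellD UX (s.take (p+1)))
      (clsCellD UX (s'.take (p+1))) (clsCellD UX (s.take (p+2))) := by
  obtain ⟨n, k, kl, hk, hl, hkl, u, rfl, rfl, rfl, ha1, ha2⟩ := h
  have hpa := pointed_take hps hp0
  have hpb := pointed_take hps (show 0 < p + 1 by omega)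
  have hpb' := pointed_take hps' (show 0 < p + 1 by omega)
  have hpc := pointed_take hps (show 0 < p + 2 by omega)
  have hla : (s.take p).getLast? = some a := by
    rw [getLast?_take s hp0 (by omega)]; simpa using ha
  have hlb : (s.take (p+1)).getLast? = some ⟨n+1, X.toPCSet.face false ⟨kl, hl⟩ u⟩ := by
    rw [getLast?_take s (by omega) (by omega)]; simpa using hb
  have hlb' : (s'.take (p+1)).getLast? = some ⟨n+1, X.toPCSet.face false ⟨k, by omega⟩ u⟩ := by
    rw [getLast?_take s' (by omega) (by omega)]; simpa using hb'
  have hlc : (s.take (p+2)).getLast? = some ⟨n+2, u⟩ := by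
    rw [getLast?_take s (by omega) (by omega)]; simpa using hc
  have ht1 : s.take (p+1) = s.take p ++ [(⟨n+1, X.toPCSet.face false ⟨kl, hl⟩ u⟩ : X.toPCSet.Cell)] :=
    take_succ_eq' hb
  have ht1' : s'.take (p+1) = s.take p ++ [(⟨n+1, X.toPCSet.face false ⟨k, by omega⟩ u⟩ : X.toPCSet.Cell)] := by
    rw [take_succ_eq' hb', ← htp]
  have ht2 : s.take (p+2) = s.take (p+1) ++ [(⟨n+2, u⟩ : X.toPCSet.Cell)] := take_succ_eq' hc
  have ht2' : s'.take (p+2) = s'.take (p+1) ++ [(⟨n+2, u⟩ : X.toPCSet.Cell)] := take_succ_eq' hc'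
  have hCspec : clsCellD UX (s.take (p+2)) = ⟨n+2, UX.cls (n+2) ⟨s.take (p+2), hpc, u, hlc⟩⟩ :=
    clsCellD_spec UX hpc hlc
  set U := UX.cls (n+2) ⟨s.take (p+2), hpc, u, hlc⟩ with hU
  have hB : clsCellD UX (s.take (p+1)) = ⟨n+1, UX.Xu.toPCSet.face false ⟨kl, hl⟩ U⟩ :=
    clsD_face_false UX hpc hpb hlc hlb (by rw [← ht2]; exact Relation.ReflTransGen.refl) hCspec
  have hB' : clsCellD UX (s'.take (p+1)) = ⟨n+1, UX.Xu.toPCSet.face false ⟨k, by omega⟩ U⟩ :=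
    clsD_face_false UX hpc hpb' hlc hlb' (by rw [← ht2']; exact homotopic_symm hhom) hCspec
  have hA1 : clsCellD UX (s.take p) =
      ⟨n, UX.Xu.toPCSet.face false ⟨k, hk⟩ (UX.Xu.toPCSet.face false ⟨kl, hl⟩ U)⟩ :=
    clsD_face_false UX hpb hpa hlb (by rw [hla, ha1]) (by rw [← ht1]; exact Relation.ReflTransGen.refl) hB
  have hA2 : clsCellD UX (s.take p) =
      ⟨n, UX.Xu.toPCSet.face false ⟨kl - 1, by omega⟩ (UX.Xu.toPCSet.face false ⟨k, by omega⟩ U)⟩ :=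
    clsD_face_false UX hpb' hpa hlb' (by rw [hla, ha2])
      (by rw [← ht1']; exact Relation.ReflTransGen.refl) hB'
  exact ⟨n, k, kl, hk, hl, hkl, U, hCspec, hB, hB', hA1, hA2⟩

end Coref
end Dev6
section Dev7
open PCSet List
namespace Coref
variable {X Y : HDA}

theorem adj2_lift (UX : Unfolding X) {s s' : List X.toPCSet.Cell}
    (hps : X.IsPointedPath s) (hps' : X.IsPointedPath s')
    {p : ℕ} (hp0 : 0 < p) (hp1 : p + 1 < s.length) (hlen : s.length = s'.length)
    (htp : s.take p = s'.take p)
    {a b b' c : X.toPCSet.Cell} (ha : s[p-1]? = some a) (hb : s[p]? = some b)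
    (hb' : s'[p]? = some b') (hc : s[p+1]? = some c) (hc' : s'[p+1]? = some c)
    (hhom : X.toPCSet.Homotopic (s.take (p+2)) (s'.take (p+2)))
    (h : X.toPCSet.Adj2 a b b' c) :
    UX.Xu.toPCSet.Adj2 (clsCellD UX (s.take p)) (clsCellD UX (s.take (p+1)))
      (clsCellD UX (s'.take (p+1))) (clsCellD UX (s.take (p+2))) := by
  obtain ⟨n, k, kl, hk, hl, hkl, u, rfl, rfl, rfl, rfl, hc2⟩ := h
  have hpa := pointed_take hps hp0
  have hpb := pointed_take hps (show 0 < p + 1 by omega)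
  have hpb' := pointed_take hps' (show 0 < p + 1 by omega)
  have hpc := pointed_take hps (show 0 < p + 2 by omega)
  have hpc' := pointed_take hps' (show 0 < p + 2 by omega)
  have hla : (s.take p).getLast? = some ⟨n+2, u⟩ := by
    rw [getLast?_take s hp0 (by omega)]; simpa using ha
  have hlb : (s.take (p+1)).getLast? = some ⟨n+1, X.toPCSet.face true ⟨k, hk⟩ u⟩ := by
    rw [getLast?_take s (by omega) (by omega)]; simpa using hb
  have hlb' : (s'.take (p+1)).getLast? = some ⟨n+1, X.toPCSet.face true ⟨kl - 1, by omega⟩ u⟩ := by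
    rw [getLast?_take s' (by omega) (by omega)]; simpa using hb'
  have ht1 : s.take (p+1) = s.take p ++ [(⟨n+1, X.toPCSet.face true ⟨k, hk⟩ u⟩ : X.toPCSet.Cell)] :=
    take_succ_eq' hb
  have ht1' : s'.take (p+1) = s.take p ++ [(⟨n+1, X.toPCSet.face true ⟨kl - 1, by omega⟩ u⟩ : X.toPCSet.Cell)] := by
    rw [take_succ_eq' hb', ← htp]
  have ht2 : s.take (p+2) = s.take (p+1) ++
      [(⟨n, X.toPCSet.face true ⟨kl, hl⟩ (X.toPCSet.face true ⟨k, hk⟩ u)⟩ : X.toPCSet.Cell)] :=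
    take_succ_eq' hc
  have ht2' : s'.take (p+2) = s'.take (p+1) ++
      [(⟨n, X.toPCSet.face true ⟨k, by omega⟩ (X.toPCSet.face true ⟨kl - 1, by omega⟩ u)⟩ : X.toPCSet.Cell)] := by
    rw [take_succ_eq' hc', hc2]
  have hAspec : clsCellD UX (s.take p) = ⟨n+2, UX.cls (n+2) ⟨s.take p, hpa, u, hla⟩⟩ :=
    clsCellD_spec UX hpa hla
  set U := UX.cls (n+2) ⟨s.take p, hpa, u, hla⟩ with hU
  have hB : clsCellD UX (s.take (p+1)) = ⟨n+1, UX.Xu.toPCSet.face true ⟨k, hk⟩ U⟩ :=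
    clsD_face_true UX hpa hla ht1 hpb hAspec
  have hB' : clsCellD UX (s'.take (p+1)) = ⟨n+1, UX.Xu.toPCSet.face true ⟨kl - 1, by omega⟩ U⟩ :=
    clsD_face_true UX hpa hla ht1' hpb' hAspec
  have hC1 : clsCellD UX (s.take (p+2)) =
      ⟨n, UX.Xu.toPCSet.face true ⟨kl, hl⟩ (UX.Xu.toPCSet.face true ⟨k, hk⟩ U)⟩ :=
    clsD_face_true UX hpb hlb ht2 hpc hB
  have hC2 : clsCellD UX (s.take (p+2)) =
      ⟨n, UX.Xu.toPCSet.face true ⟨k, by omega⟩ (UX.Xu.toPCSet.face true ⟨kl - 1, by omega⟩ U)⟩ := by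
    rw [clsCellD_homotopic UX hpc hhom]
    exact clsD_face_true UX hpb' hlb' ht2' hpc' hB'
  exact ⟨n, k, kl, hk, hl, hkl, U, hAspec, hB, hB', hC1, hC2⟩

theorem adj3_lift (UX : Unfolding X) {s s' : List X.toPCSet.Cell}
    (hps : X.IsPointedPath s) (hps' : X.IsPointedPath s')
    {p : ℕ} (hp0 : 0 < p) (hp1 : p + 1 < s.length) (hlen : s.length = s'.length)
    (htp : s.take p = s'.take p)
    {a b b' c : X.toPCSet.Cell} (ha : s[p-1]? = some a) (hb : s[p]? = some b)
    (hb' : s'[p]? = some b') (hc : s[p+1]? = some c) (hc' : s'[p+1]? = some c)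
    (hhom : X.toPCSet.Homotopic (s.take (p+2)) (s'.take (p+2)))
    (h : X.toPCSet.Adj3 a b b' c) :
    UX.Xu.toPCSet.Adj3 (clsCellD UX (s.take p)) (clsCellD UX (s.take (p+1)))
      (clsCellD UX (s'.take (p+1))) (clsCellD UX (s.take (p+2))) := by
  obtain ⟨n, k, kl, hk, hl, hkl, u, rfl, rfl, rfl, rfl⟩ := h
  have hpa := pointed_take hps hp0
  have hpb := pointed_take hps (show 0 < p + 1 by omega)
  have hpb' := pointed_take hps' (show 0 < p + 1 by omega)
  have hpc := pointed_take hps (show 0 < p + 2 by omega)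
  have hpc' := pointed_take hps' (show 0 < p + 2 by omega)
  have hla : (s.take p).getLast? = some ⟨n+1, X.toPCSet.face false ⟨k, by omega⟩ u⟩ := by
    rw [getLast?_take s hp0 (by omega)]; simpa using ha
  have hlb : (s.take (p+1)).getLast? =
      some ⟨n, X.toPCSet.face false ⟨k, hk⟩ (X.toPCSet.face true ⟨kl, hl⟩ u)⟩ := by
    rw [getLast?_take s (by omega) (by omega)]; simpa using hb
  have hlb' : (s'.take (p+1)).getLast? = some ⟨n+2, u⟩ := by
    rw [getLast?_take s' (by omega) (by omega)]; simpa using hb'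
  have hlc : (s.take (p+2)).getLast? = some ⟨n+1, X.toPCSet.face true ⟨kl, hl⟩ u⟩ := by
    rw [getLast?_take s (by omega) (by omega)]; simpa using hc
  have ht1' : s'.take (p+1) = s.take p ++ [(⟨n+2, u⟩ : X.toPCSet.Cell)] := by
    rw [take_succ_eq' hb', ← htp]
  have ht2 : s.take (p+2) = s.take (p+1) ++
      [(⟨n+1, X.toPCSet.face true ⟨kl, hl⟩ u⟩ : X.toPCSet.Cell)] := take_succ_eq' hc
  have ht2' : s'.take (p+2) = s'.take (p+1) ++
      [(⟨n+1, X.toPCSet.face true ⟨kl, hl⟩ u⟩ : X.toPCSet.Cell)] := take_succ_eq' hc'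
  have hB'spec : clsCellD UX (s'.take (p+1)) =
      ⟨n+2, UX.cls (n+2) ⟨s'.take (p+1), hpb', u, hlb'⟩⟩ := clsCellD_spec UX hpb' hlb'
  set U := UX.cls (n+2) ⟨s'.take (p+1), hpb', u, hlb'⟩ with hU
  have hA : clsCellD UX (s.take p) = ⟨n+1, UX.Xu.toPCSet.face false ⟨k, by omega⟩ U⟩ :=
    clsD_face_false UX hpb' hpa hlb' hla
      (by rw [← ht1']; exact Relation.ReflTransGen.refl) hB'spec
  have hC : clsCellD UX (s.take (p+2)) = ⟨n+1, UX.Xu.toPCSet.face true ⟨kl, hl⟩ U⟩ := by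
    rw [clsCellD_homotopic UX hpc hhom]
    exact clsD_face_true UX hpb' hlb' ht2' hpc' hB'spec
  have hB : clsCellD UX (s.take (p+1)) =
      ⟨n, UX.Xu.toPCSet.face false ⟨k, hk⟩ (UX.Xu.toPCSet.face true ⟨kl, hl⟩ U)⟩ :=
    clsD_face_false UX hpc hpb hlc hlb
      (by rw [← ht2]; exact Relation.ReflTransGen.refl) hC
  exact ⟨n, k, kl, hk, hl, hkl, U, hB'spec, hB, hA, hC⟩

theorem adj4_lift (UX : Unfolding X) {s s' : List X.toPCSet.Cell}
    (hps : X.IsPointedPath s) (hps' : X.IsPointedPath s')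
    {p : ℕ} (hp0 : 0 < p) (hp1 : p + 1 < s.length) (hlen : s.length = s'.length)
    (htp : s.take p = s'.take p)
    {a b b' c : X.toPCSet.Cell} (ha : s[p-1]? = some a) (hb : s[p]? = some b)
    (hb' : s'[p]? = some b') (hc : s[p+1]? = some c) (hc' : s'[p+1]? = some c)
    (hhom : X.toPCSet.Homotopic (s.take (p+2)) (s'.take (p+2)))
    (h : X.toPCSet.Adj4 a b b' c) :
    UX.Xu.toPCSet.Adj4 (clsCellD UX (s.take p)) (clsCellD UX (s.take (p+1)))
      (clsCellD UX (s'.take (p+1))) (clsCellD UX (s.take (p+2))) := by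
  obtain ⟨n, k, kl, hk, hl, hkl, u, rfl, rfl, rfl, rfl⟩ := h
  have hpa := pointed_take hps hp0
  have hpb := pointed_take hps (show 0 < p + 1 by omega)
  have hpb' := pointed_take hps' (show 0 < p + 1 by omega)
  have hpc := pointed_take hps (show 0 < p + 2 by omega)
  have hpc' := pointed_take hps' (show 0 < p + 2 by omega)
  have hla : (s.take p).getLast? = some ⟨n+1, X.toPCSet.face false ⟨kl, hl⟩ u⟩ := by
    rw [getLast?_take s hp0 (by omega)]; simpa using ha
  have hlb' : (s'.take (p+1)).getLast? = some ⟨n+2, u⟩ := by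
    rw [getLast?_take s' (by omega) (by omega)]; simpa using hb'
  have ht1 : s.take (p+1) = s.take p ++
      [(⟨n, X.toPCSet.face true ⟨k, hk⟩ (X.toPCSet.face false ⟨kl, hl⟩ u)⟩ : X.toPCSet.Cell)] :=
    take_succ_eq' hb
  have ht1' : s'.take (p+1) = s.take p ++ [(⟨n+2, u⟩ : X.toPCSet.Cell)] := by
    rw [take_succ_eq' hb', ← htp]
  have ht2' : s'.take (p+2) = s'.take (p+1) ++
      [(⟨n+1, X.toPCSet.face true ⟨k, by omega⟩ u⟩ : X.toPCSet.Cell)] := take_succ_eq' hc'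
  have hB'spec : clsCellD UX (s'.take (p+1)) =
      ⟨n+2, UX.cls (n+2) ⟨s'.take (p+1), hpb', u, hlb'⟩⟩ := clsCellD_spec UX hpb' hlb'
  set U := UX.cls (n+2) ⟨s'.take (p+1), hpb', u, hlb'⟩ with hU
  have hA : clsCellD UX (s.take p) = ⟨n+1, UX.Xu.toPCSet.face false ⟨kl, hl⟩ U⟩ :=
    clsD_face_false UX hpb' hpa hlb' hla
      (by rw [← ht1']; exact Relation.ReflTransGen.refl) hB'spec
  have hC : clsCellD UX (s.take (p+2)) = ⟨n+1, UX.Xu.toPCSet.face true ⟨k, by omega⟩ U⟩ := by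
    rw [clsCellD_homotopic UX hpc hhom]
    exact clsD_face_true UX hpb' hlb' ht2' hpc' hB'spec
  have hB : clsCellD UX (s.take (p+1)) =
      ⟨n, UX.Xu.toPCSet.face true ⟨k, hk⟩ (UX.Xu.toPCSet.face false ⟨kl, hl⟩ U)⟩ :=
    clsD_face_true UX hpa hla ht1 hpb hA
  exact ⟨n, k, kl, hk, hl, hkl, U, hB'spec, hB, hA, hC⟩

end Coref
end Dev7
section Dev8
open PCSet List
namespace Coref
variable {X Y : HDA}

theorem adjmid_lift (UX : Unfolding X) {s s' : List X.toPCSet.Cell}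
    (hps : X.IsPointedPath s) (hps' : X.IsPointedPath s')
    {p : ℕ} (hp0 : 0 < p) (hp1 : p + 1 < s.length) (hlen : s.length = s'.length)
    (htp : s.take p = s'.take p)
    {a b b' c : X.toPCSet.Cell} (ha : s[p-1]? = some a) (hb : s[p]? = some b)
    (hb' : s'[p]? = some b') (hc : s[p+1]? = some c) (hc' : s'[p+1]? = some c)
    (hhom : X.toPCSet.Homotopic (s.take (p+2)) (s'.take (p+2)))
    (hmid : X.toPCSet.AdjMid a b b' c) :
    UX.Xu.toPCSet.AdjMid (clsCellD UX (s.take p)) (clsCellD UX (s.take (p+1)))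
      (clsCellD UX (s'.take (p+1))) (clsCellD UX (s.take (p+2))) := by
  have ha' : s'[p-1]? = some a := by
    rw [← getElem?_of_take_eq htp (show p - 1 < p by omega)]; exact ha
  have htpEq : clsCellD UX (s'.take p) = clsCellD UX (s.take p) := by rw [htp]
  have hCEq : clsCellD UX (s'.take (p+2)) = clsCellD UX (s.take (p+2)) :=
    (clsCellD_homotopic UX (pointed_take hps (by omega)) hhom).symm
  have hp1' : p + 1 < s'.length := by omega
  rcases hmid with h | h | h | h | h | h | h | h
  · exact Or.inl (adj1_lift UX hps hps' hp0 hp1 hlen htp ha hb hb' hc hc' hhom h)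
  · exact Or.inr (Or.inl (adj2_lift UX hps hps' hp0 hp1 hlen htp ha hb hb' hc hc' hhom h))
  · exact Or.inr (Or.inr (Or.inl
      (adj3_lift UX hps hps' hp0 hp1 hlen htp ha hb hb' hc hc' hhom h)))
  · exact Or.inr (Or.inr (Or.inr (Or.inl
      (adj4_lift UX hps hps' hp0 hp1 hlen htp ha hb hb' hc hc' hhom h)))) 
  · refine Or.inr (Or.inr (Or.inr (Or.inr (Or.inl ?_))))
    have res := adj1_lift UX hps' hps hp0 hp1' hlen.symm htp.symm ha' hb' hb hc' hc
      (homotopic_symm hhom) h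
    rwa [htpEq, hCEq] at res
  · refine Or.inr (Or.inr (Or.inr (Or.inr (Or.inr (Or.inl ?_)))))
    have res := adj2_lift UX hps' hps hp0 hp1' hlen.symm htp.symm ha' hb' hb hc' hc
      (homotopic_symm hhom) h
    rwa [htpEq, hCEq] at res
  · refine Or.inr (Or.inr (Or.inr (Or.inr (Or.inr (Or.inr (Or.inl ?_))))))
    have res := adj3_lift UX hps' hps hp0 hp1' hlen.symm htp.symm ha' hb' hb hc' hc
      (homotopic_symm hhom) h
    rwa [htpEq, hCEq] at res
  · refine Or.inr (Or.inr (Or.inr (Or.inr (Or.inr (Or.inr (Or.inr ?_))))))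
    have res := adj4_lift UX hps' hps hp0 hp1' hlen.symm htp.symm ha' hb' hb hc' hc
      (homotopic_symm hhom) h
    rwa [htpEq, hCEq] at res

theorem lift_adjacent (UX : Unfolding X) {l l' : List X.toPCSet.Cell}
    (hpl : X.IsPointedPath l) (h : X.toPCSet.Adjacent l l') :
    Lp UX l = Lp UX l' ∨ UX.Xu.toPCSet.Adjacent (Lp UX l) (Lp UX l') := by
  have hpl' := adjacent_pointed h hpl
  obtain ⟨h1, h2, hlen, p, hp0, hp1, hoff, hne, a, b, b', c, ha, hb, hb', hc, hmid⟩ := h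
  have htakeq : ∀ m, m ≤ p → l.take m = l'.take m := by
    intro m hm
    apply List.ext_getElem?
    intro q
    rw [List.getElem?_take, List.getElem?_take]
    split
    · exact hoff q (by omega)
    · rfl
  have hc' : l'[p+1]? = some c := by rw [← hoff (p+1) (by omega)]; exact hc
  have hadj_take : ∀ m, p + 2 ≤ m → m ≤ l.length →
      X.toPCSet.Adjacent (l.take m) (l'.take m) := by
    intro m hm2 hml
    refine ⟨isCubePath_take h1 (by omega), isCubePath_take h2 (by omega),
      by simp [List.length_take]; omega, p, hp0, by
        rw [List.length_take]; omega, ?_, ?_, a, b, b', c, ?_, ?_, ?_, ?_, hmid⟩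
    · intro q hq
      rw [List.getElem?_take, List.getElem?_take]
      split
      · exact hoff q hq
      · rfl
    · rw [List.getElem?_take, List.getElem?_take, if_pos (by omega), if_pos (by omega)]
      exact hne
    · rw [List.getElem?_take, if_pos (by omega)]; exact ha
    · rw [List.getElem?_take, if_pos (by omega)]; exact hb
    · rw [List.getElem?_take, if_pos (by omega)]; exact hb'
    · rw [List.getElem?_take, if_pos (by omega)]; exact hc
  have hhom_take : ∀ m, p + 2 ≤ m → m ≤ l.length →
      X.toPCSet.Homotopic (l.take m) (l'.take m) :=
    fun m h1m h2m => Relation.ReflTransGen.single (hadj_take m h1m h2m)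
  have hclsq : ∀ q, p < q → q + 1 ≤ l.length →
      clsCellD UX (l.take (q+1)) = clsCellD UX (l'.take (q+1)) :=
    fun q h1q h2q => clsCellD_homotopic UX (pointed_take hpl (by omega))
      (hhom_take (q+1) (by omega) h2q)
  have hoffL : ∀ q, q ≠ p → (Lp UX l)[q]? = (Lp UX l')[q]? := by
    intro q hq
    rw [Lp_getElem?, Lp_getElem?, ← hlen]
    split
    · rcases lt_or_gt_of_ne hq with hlt | hgt
      · rw [htakeq (q+1) (by omega)]
      · rw [hclsq q hgt (by omega)]
    · rfl
  by_cases hPeq : (Lp UX l)[p]? = (Lp UX l')[p]?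
  · left
    apply List.ext_getElem?
    intro q
    by_cases hq : q = p
    · subst hq; exact hPeq
    · exact hoffL q hq
  · right
    refine ⟨(Lp_pointed UX hpl).1, (Lp_pointed UX hpl').1,
      by rw [Lp_length, Lp_length, hlen], p, hp0, by rw [Lp_length]; exact hp1,
      hoffL, hPeq, clsCellD UX (l.take p), clsCellD UX (l.take (p+1)),
      clsCellD UX (l'.take (p+1)), clsCellD UX (l.take (p+2)), ?_, ?_, ?_, ?_, ?_⟩
    · rw [Lp_getElem?, if_pos (by omega), show p - 1 + 1 = p by omega]
    · rw [Lp_getElem?, if_pos (by omega)]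
    · rw [Lp_getElem?, if_pos (by omega)]
    · rw [Lp_getElem?, if_pos (by omega)]
    · exact adjmid_lift UX hpl hpl' hp0 hp1 hlen (htakeq p le_rfl) ha hb hb' hc hc'
        (hhom_take (p+2) le_rfl (by omega)) hmid

end Coref
end Dev8
section Dev9
open PCSet List
namespace Coref

variable {Z W : PCSet}

theorem hom_cell_dim (f : Hom Z W) (x : Z.Cell) : (f.cell x).1 = x.1 := rfl

theorem hom_step (f : Hom Z W) {x y : Z.Cell} (h : Z.Step x y) :
    W.Step (f.cell x) (f.cell y) := by
  rcases h with ⟨n, k, c, rfl, rfl⟩ | ⟨n, k, c, rfl, rfl⟩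
  · exact Or.inl ⟨n, k, f.map (n+1) c, by simp [Hom.cell, f.comm], rfl⟩
  · exact Or.inr ⟨n, k, f.map (n+1) c, rfl, by simp [Hom.cell, f.comm]⟩

theorem hom_adjmid (f : Hom Z W) {a b b' c : Z.Cell} (h : Z.AdjMid a b b' c) :
    W.AdjMid (f.cell a) (f.cell b) (f.cell b') (f.cell c) := by
  have p1 : ∀ {a b b' c : Z.Cell}, Z.Adj1 a b b' c →
      W.Adj1 (f.cell a) (f.cell b) (f.cell b') (f.cell c) := by
    rintro a b b' c ⟨n, k, kl, hk, hl, hkl, u, rfl, rfl, rfl, ha1, ha2⟩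
    exact ⟨n, k, kl, hk, hl, hkl, f.map (n+2) u, by simp [Hom.cell, f.comm],
      by simp [Hom.cell, f.comm], by simp [Hom.cell, f.comm],
      by rw [ha1]; simp [Hom.cell, f.comm], by rw [ha2]; simp [Hom.cell, f.comm]⟩
  have p2 : ∀ {a b b' c : Z.Cell}, Z.Adj2 a b b' c →
      W.Adj2 (f.cell a) (f.cell b) (f.cell b') (f.cell c) := by
    rintro a b b' c ⟨n, k, kl, hk, hl, hkl, u, rfl, rfl, rfl, rfl, hc2⟩
    exact ⟨n, k, kl, hk, hl, hkl, f.map (n+2) u, by simp [Hom.cell, f.comm],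
      by simp [Hom.cell, f.comm], by simp [Hom.cell, f.comm],
      by simp [Hom.cell, f.comm], by rw [hc2]; simp [Hom.cell, f.comm]⟩
  have p3 : ∀ {a b b' c : Z.Cell}, Z.Adj3 a b b' c →
      W.Adj3 (f.cell a) (f.cell b) (f.cell b') (f.cell c) := by
    rintro a b b' c ⟨n, k, kl, hk, hl, hkl, u, rfl, rfl, rfl, rfl⟩
    exact ⟨n, k, kl, hk, hl, hkl, f.map (n+2) u, by simp [Hom.cell, f.comm],
      by simp [Hom.cell, f.comm], by simp [Hom.cell, f.comm], by simp [Hom.cell, f.comm]⟩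
  have p4 : ∀ {a b b' c : Z.Cell}, Z.Adj4 a b b' c →
      W.Adj4 (f.cell a) (f.cell b) (f.cell b') (f.cell c) := by
    rintro a b b' c ⟨n, k, kl, hk, hl, hkl, u, rfl, rfl, rfl, rfl⟩
    exact ⟨n, k, kl, hk, hl, hkl, f.map (n+2) u, by simp [Hom.cell, f.comm],
      by simp [Hom.cell, f.comm], by simp [Hom.cell, f.comm], by simp [Hom.cell, f.comm]⟩
  rcases h with h | h | h | h | h | h | h | h
  · exact Or.inl (p1 h)
  · exact Or.inr (Or.inl (p2 h))
  · exact Or.inr (Or.inr (Or.inl (p3 h)))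
  · exact Or.inr (Or.inr (Or.inr (Or.inl (p4 h))))
  · exact Or.inr (Or.inr (Or.inr (Or.inr (Or.inl (p1 h)))))
  · exact Or.inr (Or.inr (Or.inr (Or.inr (Or.inr (Or.inl (p2 h))))))
  · exact Or.inr (Or.inr (Or.inr (Or.inr (Or.inr (Or.inr (Or.inl (p3 h)))))))
  · exact Or.inr (Or.inr (Or.inr (Or.inr (Or.inr (Or.inr (Or.inr (p4 h)))))))

theorem hom_cubePath (f : Hom Z W) {l : List Z.Cell} (h : Z.IsCubePath l) :
    W.IsCubePath (l.map f.cell) := by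
  refine ⟨by simpa using h.1, ?_⟩
  exact List.isChain_map_of_isChain f.cell (fun x y hxy => hom_step f hxy) h.2

theorem hom_adjacent (f : Hom Z W) {l l' : List Z.Cell} (h : Z.Adjacent l l') :
    l.map f.cell = l'.map f.cell ∨ W.Adjacent (l.map f.cell) (l'.map f.cell) := by
  obtain ⟨h1, h2, hlen, p, hp0, hp1, hoff, hne, a, b, b', c, ha, hb, hb', hc, hmid⟩ := h
  have hoffm : ∀ q, q ≠ p → (l.map f.cell)[q]? = (l'.map f.cell)[q]? := by
    intro q hq
    rw [List.getElem?_map, List.getElem?_map, hoff q hq]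
  by_cases hPeq : (l.map f.cell)[p]? = (l'.map f.cell)[p]?
  · left
    apply List.ext_getElem?
    intro q
    by_cases hq : q = p
    · subst hq; exact hPeq
    · exact hoffm q hq
  · right
    refine ⟨hom_cubePath f h1, hom_cubePath f h2, by simp [hlen], p, hp0,
      by simpa using hp1, hoffm, hPeq, f.cell a, f.cell b, f.cell b', f.cell c,
      ?_, ?_, ?_, ?_, hom_adjmid f hmid⟩
    · rw [List.getElem?_map, ha]; rfl
    · rw [List.getElem?_map, hb]; rfl
    · rw [List.getElem?_map, hb']; rfl
    · rw [List.getElem?_map, hc]; rfl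

theorem hom_homotopic_of (f : Hom Z W) {l l' : List Z.Cell}
    (h : l.map f.cell = l'.map f.cell ∨ W.Adjacent (l.map f.cell) (l'.map f.cell)) :
    W.Homotopic (l.map f.cell) (l'.map f.cell) := by
  rcases h with h | h
  · rw [h]; exact Relation.ReflTransGen.refl
  · exact Relation.ReflTransGen.single h

end Coref
end Dev9
section Dev10
open PCSet List
namespace Coref
variable {X Y : HDA}

theorem clsCellD_ppath (UX : Unfolding X) {n : ℕ} (a : X.PPath n) :
    clsCellD UX a.1 = ⟨n, UX.cls n a⟩ := by
  obtain ⟨cA, hcA⟩ := a.2.2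
  rw [clsCellD_spec UX a.2.1 hcA]
  exact congrArg (fun z => (⟨n, UX.cls n z⟩ : UX.Xu.toPCSet.Cell)) (Subtype.ext rfl)

theorem cls_congr (UX : Unfolding X) {n : ℕ} {a b : X.PPath n} (h : a.1 = b.1) :
    UX.cls n a = UX.cls n b := congrArg _ (Subtype.ext h)

/-- the image in `Y` of the lift of a pointed cube path -/
noncomputable def Fp (UX : Unfolding X) (f : HDAHom UX.Xu Y) (l : List X.toPCSet.Cell) :
    List Y.toPCSet.Cell := (Lp UX l).map f.toHom.cell

theorem Fp_concat (UX : Unfolding X) (f : HDAHom UX.Xu Y) (l : List X.toPCSet.Cell)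
    (x : X.toPCSet.Cell) :
    Fp UX f (l ++ [x]) = Fp UX f l ++ [f.toHom.cell (clsCellD UX (l ++ [x]))] := by
  unfold Fp; rw [Lp_concat, List.map_append]; rfl

theorem Fp_pointed (UX : Unfolding X) (f : HDAHom UX.Xu Y) {l : List X.toPCSet.Cell}
    (h : X.IsPointedPath l) : Y.IsPointedPath (Fp UX f l) := by
  obtain ⟨hcp, hhd⟩ := Lp_pointed UX h
  refine ⟨hom_cubePath f.toHom hcp, ?_⟩
  rw [Fp, List.head?_map, hhd]
  show some (f.toHom.cell ⟨0, UX.Xu.base⟩) = _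
  rw [show f.toHom.cell ⟨0, UX.Xu.base⟩ = ⟨0, Y.base⟩ from congrArg _ f.pointed]

theorem Fp_getLast (UX : Unfolding X) (f : HDAHom UX.Xu Y) {l : List X.toPCSet.Cell}
    (hne : l ≠ []) : (Fp UX f l).getLast? = some (f.toHom.cell (clsCellD UX l)) := by
  rw [Fp, List.getLast?_map, Lp_getLast? UX hne]; rfl

theorem Fp_homotopic (UX : Unfolding X) (f : HDAHom UX.Xu Y) {l l' : List X.toPCSet.Cell}
    (hp : X.IsPointedPath l) (h : X.toPCSet.Homotopic l l') :
    Y.toPCSet.Homotopic (Fp UX f l) (Fp UX f l') := by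
  induction h with
  | refl => exact Relation.ReflTransGen.refl
  | @tail m m' hst hadj ih =>
    have hpm : X.IsPointedPath m := homotopic_pointed hst hp
    refine ih.trans ?_
    rcases lift_adjacent UX hpm hadj with he | ha
    · unfold Fp; rw [he]
    · exact hom_homotopic_of f.toHom (hom_adjacent f.toHom ha)

/-- the bundled image path -/
noncomputable def Fb (UX : Unfolding X) (f : HDAHom UX.Xu Y) {n : ℕ} (a : X.PPath n) :
    Y.PPath n :=
  ⟨Fp UX f a.1, Fp_pointed UX f a.2.1, f.toHom.map n (UX.cls n a), by
    rw [Fp_getLast UX f a.2.1.1.1, clsCellD_ppath UX a]; rfl⟩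

theorem Fb_val (UX : Unfolding X) (f : HDAHom UX.Xu Y) {n : ℕ} (a : X.PPath n) :
    (Fb UX f a).1 = Fp UX f a.1 := rfl

theorem Fb_well (UX : Unfolding X) (UY : Unfolding Y) (f : HDAHom UX.Xu Y) {n : ℕ}
    (a b : X.PPath n) (h : UX.cls n a = UX.cls n b) :
    UY.cls n (Fb UX f a) = UY.cls n (Fb UX f b) := by
  rw [UY.cls_eq]
  exact Fp_homotopic UX f a.2.1 ((UX.cls_eq n a b).mp h)

end Coref
end Dev10
section Dev11
open PCSet List
namespace Coref
variable {X Y : HDA}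

noncomputable def gmap (UX : Unfolding X) (UY : Unfolding Y) (f : HDAHom UX.Xu Y)
    (n : ℕ) (x : UX.Xu.cube n) : UY.Xu.cube n :=
  UY.cls n (Fb UX f (UX.cls_surj n x).choose)

theorem gmap_eq (UX : Unfolding X) (UY : Unfolding Y) (f : HDAHom UX.Xu Y)
    {n : ℕ} (a : X.PPath n) :
    gmap UX UY f n (UX.cls n a) = UY.cls n (Fb UX f a) :=
  Fb_well UX UY f _ a ((UX.cls_surj n (UX.cls n a)).choose_spec)

theorem Fb_getLast (UX : Unfolding X) (f : HDAHom UX.Xu Y) {n : ℕ} (a : X.PPath n) :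
    (Fb UX f a).1.getLast? = some ⟨n, f.toHom.map n (UX.cls n a)⟩ := by
  rw [Fb_val, Fp_getLast UX f a.2.1.1.1, clsCellD_ppath UX a]; rfl

theorem gmap_proj (UX : Unfolding X) (UY : Unfolding Y) (f : HDAHom UX.Xu Y)
    (n : ℕ) (x : UX.Xu.cube n) :
    UY.proj.toHom.map n (gmap UX UY f n x) = f.toHom.map n x := by
  obtain ⟨a, ha⟩ := UX.cls_surj n x
  subst ha
  rw [gmap_eq UX UY f a]
  exact UY.proj_cls n (Fb UX f a) _ (Fb_getLast UX f a)

def basePath (X : HDA) : X.PPath 0 :=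
  ⟨[⟨0, X.base⟩], ⟨⟨by simp, List.isChain_singleton _⟩, rfl⟩, X.base, rfl⟩

theorem gmap_pointed (UX : Unfolding X) (UY : Unfolding Y) (f : HDAHom UX.Xu Y) :
    gmap UX UY f 0 UX.Xu.base = UY.Xu.base := by
  have hb : UX.cls 0 (basePath X) = UX.Xu.base := UX.cls_base _ rfl
  rw [← hb, gmap_eq UX UY f]
  apply UY.cls_base
  show Fp UX f [⟨0, X.base⟩] = _
  have hLp : Lp UX [(⟨0, X.base⟩ : X.toPCSet.Cell)] = [clsCellD UX [⟨0, X.base⟩]] := by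
    simp [Lp, List.range_succ]
  have hcls : clsCellD UX [(⟨0, X.base⟩ : X.toPCSet.Cell)] = ⟨0, UX.Xu.base⟩ := by
    have := clsCellD_ppath UX (basePath X)
    rw [show (basePath X).1 = [(⟨0, X.base⟩ : X.toPCSet.Cell)] from rfl] at this
    rw [this, hb]
  rw [Fp, hLp, List.map_singleton, hcls]
  exact congrArg (fun z => [z]) (congrArg _ f.pointed)

theorem gmap_comm_true (UX : Unfolding X) (UY : Unfolding Y) (f : HDAHom UX.Xu Y)
    (n : ℕ) (k : Fin (n+1)) (x : UX.Xu.cube (n+1)) :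
    gmap UX UY f n (UX.Xu.toPCSet.face true k x) =
      UY.Xu.toPCSet.face true k (gmap UX UY f (n+1) x) := by
  obtain ⟨a, ha⟩ := UX.cls_surj (n+1) x
  subst ha
  obtain ⟨cA, hcA⟩ := a.2.2
  have hstep : X.toPCSet.Step ⟨n+1, cA⟩ ⟨n, X.toPCSet.face true k cA⟩ :=
    Or.inr ⟨n, k, cA, rfl, rfl⟩
  have hpb : X.IsPointedPath (a.1 ++ [(⟨n, X.toPCSet.face true k cA⟩ : X.toPCSet.Cell)]) :=
    pointed_append a.2.1 (fun e he => by rw [hcA] at he; cases he; exact hstep)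
  set b : X.PPath n := ⟨a.1 ++ [⟨n, X.toPCSet.face true k cA⟩], hpb,
    X.toPCSet.face true k cA, by simp⟩ with hbdef
  have hXface : UX.Xu.toPCSet.face true k (UX.cls (n+1) a) = UX.cls n b :=
    UX.face_true n k a cA hcA b rfl
  rw [hXface, gmap_eq UX UY f b, gmap_eq UX UY f a]
  -- now compute the RHS via face_true in the unfolding of Y
  have hstepY : Y.toPCSet.Step ⟨n+1, f.toHom.map (n+1) (UX.cls (n+1) a)⟩
      ⟨n, Y.toPCSet.face true k (f.toHom.map (n+1) (UX.cls (n+1) a))⟩ :=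
    Or.inr ⟨n, k, _, rfl, rfl⟩
  have hpbY : Y.IsPointedPath ((Fb UX f a).1 ++
      [(⟨n, Y.toPCSet.face true k (f.toHom.map (n+1) (UX.cls (n+1) a))⟩ : Y.toPCSet.Cell)]) :=
    pointed_append (Fb UX f a).2.1
      (fun e he => by rw [Fb_getLast UX f a] at he; cases he; exact hstepY)
  set bY : Y.PPath n := ⟨(Fb UX f a).1 ++
      [⟨n, Y.toPCSet.face true k (f.toHom.map (n+1) (UX.cls (n+1) a))⟩], hpbY,
      Y.toPCSet.face true k (f.toHom.map (n+1) (UX.cls (n+1) a)), by simp⟩ with hbYdef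
  have hYface : UY.Xu.toPCSet.face true k (UY.cls (n+1) (Fb UX f a)) = UY.cls n bY :=
    UY.face_true n k (Fb UX f a) _ (Fb_getLast UX f a) bY rfl
  rw [hYface]
  apply cls_congr UY
  -- (Fb UX f b).1 = bY.1
  show Fp UX f b.1 = (Fb UX f a).1 ++ [_]
  rw [hbdef]
  rw [Fp_concat UX f a.1 _]
  have hclsb : clsCellD UX (a.1 ++ [(⟨n, X.toPCSet.face true k cA⟩ : X.toPCSet.Cell)]) =
      ⟨n, UX.Xu.toPCSet.face true k (UX.cls (n+1) a)⟩ := by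
    have := clsCellD_ppath UX b
    rw [hbdef] at this
    rw [this, hXface]
  rw [hclsb]
  have : f.toHom.cell ⟨n, UX.Xu.toPCSet.face true k (UX.cls (n+1) a)⟩ =
      (⟨n, Y.toPCSet.face true k (f.toHom.map (n+1) (UX.cls (n+1) a))⟩ : Y.toPCSet.Cell) :=
    congrArg (Sigma.mk n) (f.toHom.comm n true k _)
  rw [this]
  rfl

theorem gmap_comm_false (UX : Unfolding X) (UY : Unfolding Y) (f : HDAHom UX.Xu Y)
    (n : ℕ) (k : Fin (n+1)) (x : UX.Xu.cube (n+1)) :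
    gmap UX UY f n (UX.Xu.toPCSet.face false k x) =
      UY.Xu.toPCSet.face false k (gmap UX UY f (n+1) x) := by
  obtain ⟨a, ha⟩ := UX.cls_surj (n+1) x
  subst ha
  obtain ⟨cA, hcA⟩ := a.2.2
  obtain ⟨aE, haE⟩ := UX.cls_surj n (UX.Xu.toPCSet.face false k (UX.cls (n+1) a))
  obtain ⟨hlastE, hhomE⟩ :=
    (UX.face_false n k a cA hcA aE).mp haE.symm
  rw [gmap_eq UX UY f a, ← haE, gmap_eq UX UY f aE]
  -- prove equality via face_false in the unfolding of Y
  symm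
  have hstepE : X.toPCSet.Step ⟨n, X.toPCSet.face false k cA⟩ ⟨n+1, cA⟩ :=
    Or.inl ⟨n, k, cA, rfl, rfl⟩
  have hpE' : X.IsPointedPath (aE.1 ++ [(⟨n+1, cA⟩ : X.toPCSet.Cell)]) :=
    pointed_append aE.2.1 (fun e he => by rw [hlastE] at he; cases he; exact hstepE)
  have hclsE : clsCellD UX (aE.1 ++ [(⟨n+1, cA⟩ : X.toPCSet.Cell)]) =
      ⟨n+1, UX.cls (n+1) a⟩ := by
    rw [clsCellD_homotopic UX hpE' hhomE, clsCellD_ppath UX a]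
  refine (UY.face_false n k (Fb UX f a) _ (Fb_getLast UX f a) (Fb UX f aE)).mpr ⟨?_, ?_⟩
  · rw [Fb_getLast UX f aE, haE]
    have : f.toHom.map n (UX.Xu.toPCSet.face false k (UX.cls (n+1) a)) =
        Y.toPCSet.face false k (f.toHom.map (n+1) (UX.cls (n+1) a)) := f.toHom.comm n false k _
    rw [this]
  · have hFp : (Fb UX f aE).1 ++ [(⟨n+1, f.toHom.map (n+1) (UX.cls (n+1) a)⟩ : Y.toPCSet.Cell)] =
        Fp UX f (aE.1 ++ [(⟨n+1, cA⟩ : X.toPCSet.Cell)]) := by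
      rw [Fp_concat UX f, hclsE]; rfl
    rw [hFp, Fb_val]
    exact Fp_homotopic UX f hpE' hhomE

end Coref
end Dev11
section Dev12
open PCSet List
namespace Coref
variable {X Y : HDA}

theorem pointed_of_append {l₀ : List X.toPCSet.Cell} {x : X.toPCSet.Cell}
    (h : X.IsPointedPath (l₀ ++ [x])) (hne : l₀ ≠ []) : X.IsPointedPath l₀ := by
  have := pointed_take h (m := l₀.length) (by
    cases l₀ with | nil => exact absurd rfl hne | cons a t => simp)
  rwa [List.take_append_of_le_length le_rfl, List.take_length] at this

theorem Fp_base (UX : Unfolding X) (f : HDAHom UX.Xu Y) :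
    Fp UX f [(⟨0, X.base⟩ : X.toPCSet.Cell)] = [(⟨0, Y.base⟩ : Y.toPCSet.Cell)] := by
  have hb : UX.cls 0 (basePath X) = UX.Xu.base := UX.cls_base _ rfl
  have hLp : Lp UX [(⟨0, X.base⟩ : X.toPCSet.Cell)] = [clsCellD UX [⟨0, X.base⟩]] := by
    simp [Lp, List.range_succ]
  have hcls : clsCellD UX [(⟨0, X.base⟩ : X.toPCSet.Cell)] = ⟨0, UX.Xu.base⟩ := by
    have := clsCellD_ppath UX (basePath X)
    rw [show (basePath X).1 = [(⟨0, X.base⟩ : X.toPCSet.Cell)] from rfl] at this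
    rw [this, hb]
  rw [Fp, hLp, List.map_singleton, hcls]
  exact congrArg (fun z => [z]) (congrArg _ f.pointed)

theorem unique_aux (UX : Unfolding X) (UY : Unfolding Y) (f : HDAHom UX.Xu Y)
    (g' : HDAHom UX.Xu UY.Xu)
    (hfact : ∀ (n : ℕ) (x : UX.Xu.cube n),
      UY.proj.toHom.map n (g'.toHom.map n x) = f.toHom.map n x) :
    ∀ (m n : ℕ) (a : X.PPath n), a.1.length ≤ m →
      g'.toHom.map n (UX.cls n a) = UY.cls n (Fb UX f a) := by
  intro m
  induction m with
  | zero =>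
    intro n a hlen
    exact absurd (List.length_eq_zero_iff.mp (Nat.le_zero.mp hlen)) a.2.1.1.1
  | succ m ih =>
    intro n a hlen
    rcases List.eq_nil_or_concat a.1 with hnil | ⟨l₀, x, hcat⟩
    · exact absurd hnil a.2.1.1.1
    · rw [List.concat_eq_append] at hcat
      rcases eq_or_ne l₀ [] with rfl | hne
      · -- singleton path
        simp only [List.nil_append] at hcat
        have hx : x = ⟨0, X.base⟩ := by
          have := a.2.1.2
          rw [hcat] at this
          simpa using this
        subst hx
        obtain ⟨cL, hcL⟩ := a.2.2
        rw [hcat] at hcL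
        simp only [List.getLast?_singleton, Option.some_inj] at hcL
        obtain ⟨hn0, -⟩ := Sigma.mk.inj_iff.mp hcL
        subst hn0
        have h1 : UX.cls 0 a = UX.Xu.base := UX.cls_base a hcat
        have h2 : UY.cls 0 (Fb UX f a) = UY.Xu.base := by
          apply UY.cls_base
          rw [Fb_val, hcat]
          exact Fp_base UX f
        rw [h1, h2]
        exact g'.pointed
      · -- step case
        have hpax := a.2.1
        rw [hcat] at hpax
        have hpl₀ : X.IsPointedPath l₀ := pointed_of_append hpax hne
        obtain ⟨e, he⟩ := pointed_getLast?_isSome hpl₀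
        have hstep : X.toPCSet.Step e x := by
          have hch := hpax.1.2
          replace hch := List.isChain_append.mp hch
          exact hch.2.2 e he x rfl
        have hlen₀ : l₀.length ≤ m := by
          have : a.1.length = l₀.length + 1 := by rw [hcat]; simp
          omega
        rcases hstep with ⟨q, kk, cc, heq, rfl⟩ | ⟨q, kk, cc, heq, rfl⟩
        · -- up step : e = δ^0 x
          subst heq
          have hcA : a.1.getLast? = some ⟨q+1, cc⟩ := by rw [hcat]; simp
          obtain ⟨cL, hcL⟩ := a.2.2
          obtain ⟨hn, -⟩ := Sigma.mk.inj_iff.mp (Option.some_inj.mp (hcA.symm.trans hcL))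
          subst hn
          set a₀ : X.PPath q := ⟨l₀, hpl₀, X.toPCSet.face false kk cc, he⟩ with ha₀
          have hfaceX : UX.Xu.toPCSet.face false kk (UX.cls (q+1) a) = UX.cls q a₀ :=
            (UX.face_false q kk a cc hcA a₀).mpr ⟨he, by
              rw [hcat]; exact Relation.ReflTransGen.refl⟩
          have hgface : UY.Xu.toPCSet.face false kk (g'.toHom.map (q+1) (UX.cls (q+1) a)) =
              UY.cls q (Fb UX f a₀) := by
            rw [← g'.toHom.comm q false kk (UX.cls (q+1) a), hfaceX]
            exact ih q a₀ hlen₀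
          obtain ⟨α, hα⟩ := UY.cls_surj (q+1) (g'.toHom.map (q+1) (UX.cls (q+1) a))
          obtain ⟨cα, hcα⟩ := α.2.2
          have hproj : cα = f.toHom.map (q+1) (UX.cls (q+1) a) := by
            have h1 := UY.proj_cls (q+1) α cα hcα
            rw [hα] at h1
            rw [← h1, hfact]
          obtain ⟨-, hhomF⟩ := (UY.face_false q kk α cα hcα (Fb UX f a₀)).mp
            (by rw [hα]; exact hgface)
          have hFb : (Fb UX f a).1 = (Fb UX f a₀).1 ++ [(⟨q+1, cα⟩ : Y.toPCSet.Cell)] := by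
            rw [Fb_val, hcat, Fp_concat UX f, ← hcat]
            have h2 : clsCellD UX a.1 = ⟨q+1, UX.cls (q+1) a⟩ := clsCellD_ppath UX a
            rw [h2]
            rw [show f.toHom.cell ⟨q+1, UX.cls (q+1) a⟩ =
              (⟨q+1, f.toHom.map (q+1) (UX.cls (q+1) a)⟩ : Y.toPCSet.Cell) from rfl, ← hproj]
            rfl
          have : UY.cls (q+1) (Fb UX f a) = UY.cls (q+1) α := by
            rw [UY.cls_eq]
            rw [hFb]
            exact hhomF
          rw [this, hα]
        · -- down step : x = δ^1 e
          subst heq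
          have hcA : a.1.getLast? = some ⟨q, X.toPCSet.face true kk cc⟩ := by rw [hcat]; simp
          obtain ⟨cL, hcL⟩ := a.2.2
          obtain ⟨hn, -⟩ := Sigma.mk.inj_iff.mp (Option.some_inj.mp (hcA.symm.trans hcL))
          subst hn
          set a₀ : X.PPath (q+1) := ⟨l₀, hpl₀, cc, he⟩ with ha₀
          have hfaceX : UX.Xu.toPCSet.face true kk (UX.cls (q+1) a₀) = UX.cls q a :=
            UX.face_true q kk a₀ cc he a hcat
          have hstepY : Y.toPCSet.Step ⟨q+1, f.toHom.map (q+1) (UX.cls (q+1) a₀)⟩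
              ⟨q, Y.toPCSet.face true kk (f.toHom.map (q+1) (UX.cls (q+1) a₀))⟩ :=
            Or.inr ⟨q, kk, _, rfl, rfl⟩
          have hpbY : Y.IsPointedPath ((Fb UX f a₀).1 ++
              [(⟨q, Y.toPCSet.face true kk (f.toHom.map (q+1) (UX.cls (q+1) a₀))⟩ :
                Y.toPCSet.Cell)]) :=
            pointed_append (Fb UX f a₀).2.1
              (fun e' he' => by rw [Fb_getLast UX f a₀] at he'; cases he'; exact hstepY)
          set bY : Y.PPath q := ⟨(Fb UX f a₀).1 ++
              [⟨q, Y.toPCSet.face true kk (f.toHom.map (q+1) (UX.cls (q+1) a₀))⟩], hpbY,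
              Y.toPCSet.face true kk (f.toHom.map (q+1) (UX.cls (q+1) a₀)), by simp⟩ with hbY
          have hYface : UY.Xu.toPCSet.face true kk (UY.cls (q+1) (Fb UX f a₀)) = UY.cls q bY :=
            UY.face_true q kk (Fb UX f a₀) _ (Fb_getLast UX f a₀) bY rfl
          have hFb : (Fb UX f a).1 = bY.1 := by
            rw [Fb_val, hcat, Fp_concat UX f, ← hcat]
            have h2 : clsCellD UX a.1 = ⟨q, UX.cls q a⟩ := clsCellD_ppath UX a
            rw [h2, ← hfaceX]
            rw [show f.toHom.cell ⟨q, UX.Xu.toPCSet.face true kk (UX.cls (q+1) a₀)⟩ =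
              (⟨q, f.toHom.map q (UX.Xu.toPCSet.face true kk (UX.cls (q+1) a₀))⟩ :
                Y.toPCSet.Cell) from rfl]
            rw [f.toHom.comm q true kk (UX.cls (q+1) a₀)]
            rfl
          calc g'.toHom.map q (UX.cls q a)
              = g'.toHom.map q (UX.Xu.toPCSet.face true kk (UX.cls (q+1) a₀)) := by
                rw [hfaceX]
            _ = UY.Xu.toPCSet.face true kk (g'.toHom.map (q+1) (UX.cls (q+1) a₀)) :=
                g'.toHom.comm q true kk _
            _ = UY.Xu.toPCSet.face true kk (UY.cls (q+1) (Fb UX f a₀)) := by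
                rw [ih (q+1) a₀ hlen₀]
            _ = UY.cls q bY := hYface
            _ = UY.cls q (Fb UX f a) := (cls_congr UY hFb).symm

end Coref
end Dev12
section Dev13
namespace Coref

theorem hdaHom_ext {A B : HDA} {g h : HDAHom A B}
    (H : ∀ (n : ℕ) (x : A.cube n), g.toHom.map n x = h.toHom.map n x) : g = h := by
  obtain ⟨⟨gm, gc⟩, gp⟩ := g
  obtain ⟨⟨hm, hc⟩, hp⟩ := h
  have : gm = hm := by funext n x; exact H n x
  subst this
  rfl

theorem main_factor (X Y : HDA) (UX : Unfolding X) (UY : Unfolding Y)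
    (f : HDAHom UX.Xu Y) : ∃! g : HDAHom UX.Xu UY.Xu, f = UY.proj.comp g := by
  refine ⟨⟨⟨gmap UX UY f, ?_⟩, gmap_pointed UX UY f⟩, ?_, ?_⟩
  · intro n ν k x
    cases ν
    · exact gmap_comm_false UX UY f n k x
    · exact gmap_comm_true UX UY f n k x
  · exact hdaHom_ext (fun n x => (gmap_proj UX UY f n x).symm)
  · intro g' hg'
    have hfact : ∀ (n : ℕ) (x : UX.Xu.cube n),
        UY.proj.toHom.map n (g'.toHom.map n x) = f.toHom.map n x :=
      fun n x => (congrArg (fun h : HDAHom UX.Xu Y => h.toHom.map n x) hg').symm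
    apply hdaHom_ext
    intro n x
    obtain ⟨a, ha⟩ := UX.cls_surj n x
    subst ha
    show g'.toHom.map n (UX.cls n a) = gmap UX UY f n (UX.cls n a)
    rw [unique_aux UX UY f g' hfact a.1.length n a le_rfl, gmap_eq UX UY f a]

end Coref
end Dev13

open Coref

/-- Proposition 5.5: every pointed precubical morphism `f : X̃ → Y` factors
uniquely through the projection `π_Y : Ỹ → Y`; consequently (the hom-set
bijection of the adjunction) there is a coreflection between HDAh and HDA,
with counit the projections. -/
theorem hdah_coreflection :
    (∀ (X Y : HDA) (UX : Unfolding X) (UY : Unfolding Y) (f : HDAHom UX.Xu Y),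
      ∃! g : HDAHom UX.Xu UY.Xu, f = UY.proj.comp g) ∧
    (∀ (X Y : HDA) (UX : Unfolding X) (UY : Unfolding Y),
      Function.Bijective (fun g : HDAHom UX.Xu UY.Xu => UY.proj.comp g)) := by
  refine ⟨main_factor, ?_⟩
  intro X Y UX UY
  constructor
  · intro g₁ g₂ hgg
    obtain ⟨g, -, huniq⟩ := main_factor X Y UX UY (UY.proj.comp g₁)
    exact (huniq g₁ rfl).trans (huniq g₂ hgg).symm
  · intro fy
    obtain ⟨g, hfac, -⟩ := main_factor X Y UX UY fy
    exact ⟨g, hfac.symm⟩
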